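/- arXiv:math/0010013 — 3 statements merged into one kernel-verified Lean document; each statement's English description precedes it below -/
import Mathlib

section
/- Let μ be a positive Radon measure on ℝⁿ which is 1-periodic, i.e. μ(B+e_i)=μ(B) for every Borel set B ⊂ ℝⁿ and every standard basis vector e_i, and normalized so that μ([0,1)ⁿ)=1. For ε>0 define the measure μ_ε by μ_ε(B) = εⁿ μ(ε⁻¹B) for all Borel B. Then μ_ε converges locally weakly* to the Lebesgue measure as ε→0: for every continuous function f:ℝⁿ→ℝ with compact support, ∫_{ℝⁿ} f dμ_ε → ∫_{ℝⁿ} f(x) dx as ε→0. -/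
open MeasureTheory Filter Topology

section Aux

variable {n : ℕ}

/-- The lattice vector with integer coordinates `m`. -/
noncomputable def latv (n : ℕ) (m : Fin n → ℤ) : EuclideanSpace ℝ (Fin n) :=
  ∑ i, (m i : ℝ) • EuclideanSpace.single i (1 : ℝ)

lemma latv_apply (m : Fin n → ℤ) (j : Fin n) : latv n m j = m j := by
  have h := map_sum (PiLp.proj (𝕜 := ℝ) 2 (fun _ : Fin n => ℝ) j)
      (fun i => (m i : ℝ) • EuclideanSpace.single i (1 : ℝ)) Finset.univ
  rw [show latv n m j = PiLp.proj (𝕜 := ℝ) 2 (fun _ : Fin n => ℝ) j (latv n m) from rfl, latv, h]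
  simp only [_root_.map_smul, smul_eq_mul,
    show ∀ i, PiLp.proj (𝕜 := ℝ) 2 (fun _ : Fin n => ℝ) j (EuclideanSpace.single i (1:ℝ))
      = (EuclideanSpace.single i (1:ℝ)) j from fun _ => rfl]
  simp [EuclideanSpace.single_apply]

/-- The unit cube `[0,1)ⁿ`. -/
def cube (n : ℕ) : Set (EuclideanSpace ℝ (Fin n)) := WithLp.ofLp ⁻¹' Set.pi Set.univ fun _ => Set.Ico (0:ℝ) 1

lemma measurableSet_cube : MeasurableSet (cube n) :=
  (WithLp.measurable_ofLp 2 (Fin n → ℝ))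
    (MeasurableSet.univ_pi fun _ => measurableSet_Ico)

lemma volume_cube : volume (cube n) = 1 := by
  have h := (EuclideanSpace.volume_preserving_symm_measurableEquiv_toLp (Fin n)).measure_preimage
    (s := Set.pi Set.univ fun _ : Fin n => Set.Ico (0:ℝ) 1)
    (MeasurableSet.univ_pi fun _ => measurableSet_Ico).nullMeasurableSet
  rw [show (MeasurableEquiv.toLp 2 (Fin n → ℝ)).symm ⁻¹'
      (Set.pi Set.univ fun _ : Fin n => Set.Ico (0:ℝ) 1) = cube n from rfl] at h
  rw [h, volume_pi_pi]
  simp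

lemma mem_cube_iff (x : EuclideanSpace ℝ (Fin n)) :
    x ∈ cube n ↔ ∀ i, 0 ≤ x i ∧ x i < 1 := by
  rw [cube, Set.mem_preimage, Set.mem_univ_pi]; exact forall_congr' fun i => Set.mem_Ico

lemma sub_latv_mem_cube_iff (x : EuclideanSpace ℝ (Fin n)) (m : Fin n → ℤ) :
    x - latv n m ∈ cube n ↔ ∀ i, ⌊x i⌋ = m i := by
  rw [mem_cube_iff]
  refine forall_congr' fun i => ?_
  rw [show (x - latv n m) i = x i - latv n m i from rfl, latv_apply, Int.floor_eq_iff]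
  constructor
  · rintro ⟨h1, h2⟩; constructor <;> linarith
  · rintro ⟨h1, h2⟩; constructor <;> [linarith; linarith]

lemma abs_apply_le_norm (x : EuclideanSpace ℝ (Fin n)) (i : Fin n) : |x i| ≤ ‖x‖ := by
  rw [EuclideanSpace.norm_eq, ← Real.sqrt_sq_eq_abs (x i)]
  refine Real.sqrt_le_sqrt ?_
  have := Finset.single_le_sum (f := fun j => ‖x j‖ ^ 2)
    (fun j _ => sq_nonneg _) (Finset.mem_univ i)
  simpa [Real.norm_eq_abs, sq_abs] using this

lemma norm_le_sqrt_of_mem_cube {x : EuclideanSpace ℝ (Fin n)} (hx : x ∈ cube n) :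
    ‖x‖ ≤ Real.sqrt n := by
  rw [EuclideanSpace.norm_eq]
  refine Real.sqrt_le_sqrt ?_
  rw [mem_cube_iff] at hx
  calc (∑ i, ‖x i‖ ^ 2) ≤ ∑ _i : Fin n, (1:ℝ) := by
        refine Finset.sum_le_sum fun i _ => ?_
        have h := hx i
        rw [Real.norm_eq_abs, sq_abs]
        nlinarith [h.1, h.2]
    _ = n := by simp

/-- Translations preserving a measure form an additive subgroup. -/
noncomputable def invGroup (μ : Measure (EuclideanSpace ℝ (Fin n))) :
    AddSubgroup (EuclideanSpace ℝ (Fin n)) where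
  carrier := {c | Measure.map (· + c) μ = μ}
  zero_mem' := by simp
  add_mem' := by
    intro a b ha hb
    have : (fun x : EuclideanSpace ℝ (Fin n) => x + (a + b)) = (· + b) ∘ (· + a) := by
      funext x; simp [Function.comp, add_assoc]
    simp only [Set.mem_setOf_eq] at *
    rw [this, ← Measure.map_map (measurable_add_const b) (measurable_add_const a), ha, hb]
  neg_mem' := by
    intro a ha
    simp only [Set.mem_setOf_eq] at *
    conv_lhs => rw [← ha]
    rw [Measure.map_map (measurable_add_const (-a)) (measurable_add_const a)]
    simp [Function.comp]

lemma latv_mem_invGroup (μ : Measure (EuclideanSpace ℝ (Fin n)))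
    (hper : ∀ i : Fin n, ∀ B : Set (EuclideanSpace ℝ (Fin n)), MeasurableSet B →
      μ ((fun x => x + EuclideanSpace.single i (1 : ℝ)) '' B) = μ B)
    (m : Fin n → ℤ) : Measure.map (· + latv n m) μ = μ := by
  have hsingle : ∀ i : Fin n, EuclideanSpace.single i (1:ℝ) ∈ invGroup μ := by
    intro i
    have hneg : -EuclideanSpace.single i (1:ℝ) ∈ invGroup μ := by
      show Measure.map (· + -EuclideanSpace.single i (1:ℝ)) μ = μ
      refine Measure.ext fun B hB => ?_
      rw [Measure.map_apply (measurable_add_const _) hB, ← hper i B hB]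
      congr 1
      ext y
      simp only [Set.mem_preimage, Set.mem_image]
      constructor
      · intro h; exact ⟨y + -EuclideanSpace.single i 1, h, by abel⟩
      · rintro ⟨z, hz, rfl⟩; simpa using hz
    simpa using neg_mem hneg
  have : latv n m ∈ invGroup μ := by
    refine sum_mem fun i _ => ?_
    rw [show ((m i : ℝ)) • EuclideanSpace.single i (1:ℝ)
        = (m i) • EuclideanSpace.single i (1:ℝ) from Int.cast_smul_eq_zsmul ℝ _ _]
    exact zsmul_mem (hsingle i) (m i)
  exact this

lemma integral_decomp (ν : Measure (EuclideanSpace ℝ (Fin n)))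
    (hinv : ∀ m : Fin n → ℤ, Measure.map (· + latv n m) ν = ν)
    (g : EuclideanSpace ℝ (Fin n) → ℝ) (hg : Integrable g ν) :
    ∫ x, g x ∂ν = ∑' m : Fin n → ℤ, ∫ x in cube n, g (x + latv n m) ∂ν := by
  set Q : (Fin n → ℤ) → Set (EuclideanSpace ℝ (Fin n)) :=
    fun m => (fun x => x - latv n m) ⁻¹' cube n with hQ
  have hQm : ∀ m, MeasurableSet (Q m) :=
    fun m => measurableSet_cube.preimage (measurable_sub_const _)
  have hmemQ : ∀ x m, x ∈ Q m ↔ ∀ i, ⌊x i⌋ = m i := fun x m => sub_latv_mem_cube_iff x m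
  have hcover : (⋃ m, Q m) = Set.univ := by
    ext x
    simp only [Set.mem_iUnion, Set.mem_univ, iff_true]
    exact ⟨fun i => ⌊x i⌋, (hmemQ x _).2 fun i => rfl⟩
  have hdisj : Pairwise (Function.onFun Disjoint Q) := by
    intro m m' hmm'
    rw [Function.onFun, Set.disjoint_left]
    intro x hx hx'
    exact hmm' (funext fun i => ((hmemQ x m).1 hx i).symm.trans ((hmemQ x m').1 hx' i))
  calc ∫ x, g x ∂ν = ∫ x in ⋃ m, Q m, g x ∂ν := by rw [hcover, setIntegral_univ]
    _ = ∑' m, ∫ x in Q m, g x ∂ν :=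
      integral_iUnion hQm hdisj (hcover ▸ hg.integrableOn)
    _ = ∑' m : Fin n → ℤ, ∫ x in cube n, g (x + latv n m) ∂ν := by
      refine tsum_congr fun m => ?_
      conv_lhs => rw [← hinv m]
      rw [(measurableEmbedding_addRight (latv n m)).setIntegral_map]
      have hpre : (fun x => x + latv n m) ⁻¹' Q m = cube n := by
        ext x; simp [Q, add_sub_cancel_right]
      rw [hpre]

end Aux

/-- The rescaled measure `μ_ε (B) = ε^n μ(ε⁻¹ B)`. -/
noncomputable def rescaledMeasure (n : ℕ) (μ : Measure (EuclideanSpace ℝ (Fin n))) (ε : ℝ) :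
    Measure (EuclideanSpace ℝ (Fin n)) :=
  (ENNReal.ofReal ε) ^ n • Measure.map (fun x => ε • x) μ

set_option maxHeartbeats 1000000 in
/-- If `μ` is a 1-periodic positive Radon measure on `ℝⁿ` normalized by
`μ([0,1)ⁿ) = 1`, then the measures `μ_ε(B) = εⁿ μ(ε⁻¹ B)` converge locally weakly* to the
Lebesgue measure as `ε → 0⁺`: for every continuous compactly supported `f`,
`∫ f dμ_ε → ∫ f dx`. -/
theorem rescaled_periodic_measure_tendsto_lebesgue
    (n : ℕ) (hn : 1 ≤ n) (μ : Measure (EuclideanSpace ℝ (Fin n)))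
    (hRadon : ∀ K : Set (EuclideanSpace ℝ (Fin n)), IsCompact K → μ K < ⊤)
    (hper : ∀ i : Fin n, ∀ B : Set (EuclideanSpace ℝ (Fin n)), MeasurableSet B →
      μ ((fun x => x + EuclideanSpace.single i (1 : ℝ)) '' B) = μ B)
    (hnorm : μ (WithLp.ofLp ⁻¹' Set.pi Set.univ fun _ : Fin n => Set.Ico (0 : ℝ) 1) = 1)
    (f : EuclideanSpace ℝ (Fin n) → ℝ) (hf : Continuous f) (hsupp : HasCompactSupport f) :
    Tendsto (fun ε : ℝ => ∫ x, f x ∂(rescaledMeasure n μ ε)) (𝓝[>] (0 : ℝ))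
      (𝓝 (∫ x, f x)) := by
  haveI : IsFiniteMeasureOnCompacts μ := ⟨fun {K} hK => hRadon K hK⟩
  have hμc : μ (cube n) = 1 := hnorm
  have hμcR : (μ (cube n)).toReal = 1 := by rw [hμc]; simp
  have hLcR : (volume (cube n)).toReal = 1 := by rw [volume_cube]; simp
  -- support radius
  obtain ⟨R₀, hR₀⟩ := hsupp.isBounded.subset_closedBall 0
  set R : ℝ := max R₀ 0 with hRdef
  have hR0 : 0 ≤ R := le_max_right _ _
  have hRsupp : tsupport f ⊆ Metric.closedBall 0 R :=
    hR₀.trans (Metric.closedBall_subset_closedBall (le_max_left _ _))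
  set s : ℝ := Real.sqrt n with hsdef
  have hs0 : 0 ≤ s := Real.sqrt_nonneg _
  have hunif : UniformContinuous f := hsupp.uniformContinuous_of_continuous hf
  set C : ℝ := 2*R + 2*s + 3 with hCdef
  have hC0 : 0 < C := by positivity
  rw [Metric.tendsto_nhdsWithin_nhds]
  intro δ hδ
  set δ' : ℝ := δ / (2 * C ^ n + 1) with hδ'def
  have hδ'0 : 0 < δ' := by positivity
  obtain ⟨η, hη0, hηd⟩ := Metric.uniformContinuous_iff.1 hunif δ' hδ'0
  refine ⟨min 1 (η / (s + 1)), by positivity, ?_⟩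
  intro ε hεmem hεdist
  have hε : 0 < ε := hεmem
  rw [Real.dist_eq, sub_zero, abs_of_pos hε] at hεdist
  have hε1 : ε ≤ 1 := le_of_lt (lt_of_lt_of_le hεdist (min_le_left _ _))
  have hεη : ε * s < η := by
    have h1 : ε < η / (s + 1) := lt_of_lt_of_le hεdist (min_le_right _ _)
    have h2 : ε * (s + 1) < η := by
      rw [← lt_div_iff₀ (by positivity)]; exact h1
    nlinarith
  -- the rescaled function
  set g : EuclideanSpace ℝ (Fin n) → ℝ := fun x => f (ε • x) with hgdef
  have hgc : Continuous g := hf.comp (continuous_const_smul ε)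
  have hgsupp : HasCompactSupport g := by
    have : g = f ∘ (Homeomorph.smulOfNeZero ε hε.ne' :
        EuclideanSpace ℝ (Fin n) ≃ₜ EuclideanSpace ℝ (Fin n)) := rfl
    rw [this]
    exact hsupp.comp_homeomorph _
  have hgintμ : Integrable g μ := hgc.integrable_of_hasCompactSupport hgsupp
  have hgintL : Integrable g volume := hgc.integrable_of_hasCompactSupport hgsupp
  -- step 1 : the two integrals
  have h1 : ∫ x, f x ∂(rescaledMeasure n μ ε) = ε ^ n * ∫ x, g x ∂μ := by
    rw [rescaledMeasure, integral_smul_measure,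
      integral_map ((continuous_const_smul ε).measurable.aemeasurable)
        hf.aestronglyMeasurable]
    simp [ENNReal.toReal_pow, ENNReal.toReal_ofReal hε.le, smul_eq_mul]
    exact Or.inl rfl
  have h2 : ∫ x, f x = ε ^ n * ∫ x, g x ∂(volume) := by
    rw [hgdef]
    simp only []
    rw [Measure.integral_comp_smul volume f ε]
    rw [finrank_euclideanSpace_fin (𝕜 := ℝ) (n := n)]
    rw [abs_of_nonneg (by positivity), smul_eq_mul, ← mul_assoc,
      mul_inv_cancel₀ (by positivity), one_mul]
  -- step 2 : decompositions
  have hinvμ := latv_mem_invGroup μ hper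
  have hinvL : ∀ m : Fin n → ℤ,
      Measure.map (· + latv n m) (volume : Measure (EuclideanSpace ℝ (Fin n))) = volume :=
    fun m => map_add_right_eq_self volume (latv n m)
  set A : (Fin n → ℤ) → ℝ := fun m => ∫ x in cube n, g (x + latv n m) ∂μ with hAdef
  set B : (Fin n → ℤ) → ℝ := fun m => ∫ x in cube n, g (x + latv n m) ∂volume with hBdef
  have hdecμ : ∫ x, g x ∂μ = ∑' m, A m := integral_decomp μ hinvμ g hgintμ
  have hdecL : ∫ x, g x ∂volume = ∑' m, B m := integral_decomp volume hinvL g hgintL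
  -- the finite index set
  set M : ℤ := ⌈R / ε + s⌉ with hMdef
  have hM0 : 0 ≤ M := Int.ceil_nonneg (by positivity)
  have hMle : (M : ℝ) < R / ε + s + 1 := Int.ceil_lt_add_one _
  set T : Finset (Fin n → ℤ) := Fintype.piFinset fun _ => Finset.Icc (-M) M with hTdef
  -- vanishing outside T
  have hout : ∀ m ∉ T, ∀ x : EuclideanSpace ℝ (Fin n), ‖x‖ ≤ s → g (x + latv n m) = 0 := by
    intro m hm x hx
    rw [Fintype.mem_piFinset] at hm
    push_neg at hm
    obtain ⟨i, hi⟩ := hm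
    rw [Finset.mem_Icc] at hi
    push_neg at hi
    have habs : (M : ℝ) + 1 ≤ |(m i : ℝ)| := by
      have : M + 1 ≤ |m i| := by
        rcases lt_or_ge (m i) (-M) with h | h
        · calc M + 1 ≤ -(m i) := by linarith
            _ ≤ |m i| := neg_le_abs _
        · have := hi h
          calc M + 1 ≤ m i := by linarith
            _ ≤ |m i| := le_abs_self _
      exact_mod_cast this
    have hnv : R / ε + s < ‖latv n m‖ := by
      calc R / ε + s ≤ (M : ℝ) := Int.le_ceil _
        _ < (M : ℝ) + 1 := by linarith
        _ ≤ |(m i : ℝ)| := habs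
        _ = |latv n m i| := by rw [latv_apply]
        _ ≤ ‖latv n m‖ := abs_apply_le_norm _ _
    show f (ε • (x + latv n m)) = 0
    apply image_eq_zero_of_notMem_tsupport
    intro hmem
    have := hRsupp hmem
    rw [Metric.mem_closedBall, dist_zero_right] at this
    have hnorm2 : ‖ε • (x + latv n m)‖ = ε * ‖x + latv n m‖ := by
      rw [norm_smul, Real.norm_eq_abs, abs_of_pos hε]
    have h3 : ‖latv n m‖ - ‖x‖ ≤ ‖x + latv n m‖ := by
      have h := norm_add_le (x + latv n m) (-x)
      rw [show x + latv n m + -x = latv n m by abel, norm_neg] at h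
      linarith
    have h4 : R / ε < ‖x + latv n m‖ := by linarith
    rw [hnorm2] at this
    have : R < ε * ‖x + latv n m‖ := by
      calc R = ε * (R / ε) := by field_simp
        _ < ε * ‖x + latv n m‖ := by exact (mul_lt_mul_iff_right₀ hε).2 h4
    linarith
  have hA0 : ∀ m ∉ T, A m = 0 := by
    intro m hm
    rw [hAdef]
    rw [show (0:ℝ) = ∫ x in cube n, (0:ℝ) ∂μ by simp]
    exact setIntegral_congr_fun measurableSet_cube
      fun x hx => hout m hm x (norm_le_sqrt_of_mem_cube hx)
  have hB0 : ∀ m ∉ T, B m = 0 := by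
    intro m hm
    rw [hBdef]
    rw [show (0:ℝ) = ∫ x in cube n, (0:ℝ) ∂volume by simp]
    exact setIntegral_congr_fun measurableSet_cube
      fun x hx => hout m hm x (norm_le_sqrt_of_mem_cube hx)
  -- per-index estimate
  have hAB : ∀ m, |A m - B m| ≤ 2 * δ' := by
    intro m
    have hgint' : Integrable (fun x => g (x + latv n m)) μ := by
      refine (hgc.comp (continuous_add_right _)).integrable_of_hasCompactSupport ?_
      exact hgsupp.comp_homeomorph (Homeomorph.addRight (latv n m))
    have hgint'' : Integrable (fun x => g (x + latv n m)) volume := by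
      refine (hgc.comp (continuous_add_right _)).integrable_of_hasCompactSupport ?_
      exact hgsupp.comp_homeomorph (Homeomorph.addRight (latv n m))
    have hbound : ∀ x ∈ cube n, ‖g (x + latv n m) - g (latv n m)‖ ≤ δ' := by
      intro x hx
      have hdist : dist (ε • (x + latv n m)) (ε • latv n m) < η := by
        rw [dist_eq_norm, ← smul_sub, add_sub_cancel_right, norm_smul,
          Real.norm_eq_abs, abs_of_pos hε]
        calc ε * ‖x‖ ≤ ε * s := by
              exact mul_le_mul_of_nonneg_left (norm_le_sqrt_of_mem_cube hx) hε.le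
          _ < η := hεη
      have := hηd hdist
      rw [Real.dist_eq] at this
      exact le_of_lt this
    have hμt : μ (cube n) < ⊤ := by rw [hμc]; exact ENNReal.one_lt_top
    have hLt : volume (cube n) < ⊤ := by rw [volume_cube]; exact ENNReal.one_lt_top
    have hconstμ : ∫ _x in cube n, g (latv n m) ∂μ = g (latv n m) := by
      rw [setIntegral_const, measureReal_def, hμcR, one_smul]
    have hconstL : ∫ _x in cube n, g (latv n m) ∂volume = g (latv n m) := by
      rw [setIntegral_const, measureReal_def, hLcR, one_smul]
    have hAeq : ∫ x in cube n, (g (x + latv n m) - g (latv n m)) ∂μ = A m - g (latv n m) := by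
      rw [integral_sub hgint'.integrableOn
        (integrableOn_const (C := g (latv n m)) hμt.ne), hconstμ]
    have hBeq : ∫ x in cube n, (g (x + latv n m) - g (latv n m)) ∂volume
        = B m - g (latv n m) := by
      rw [integral_sub hgint''.integrableOn
        (integrableOn_const (C := g (latv n m)) hLt.ne), hconstL]
    have hA' : |∫ x in cube n, (g (x + latv n m) - g (latv n m)) ∂μ| ≤ δ' := by
      have := norm_setIntegral_le_of_norm_le_const hμt hbound
      rw [measureReal_def, hμcR, mul_one] at this
      exact this
    have hB' : |∫ x in cube n, (g (x + latv n m) - g (latv n m)) ∂volume| ≤ δ' := by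
      have := norm_setIntegral_le_of_norm_le_const hLt hbound
      rw [measureReal_def, hLcR, mul_one] at this
      exact this
    calc |A m - B m| = |(∫ x in cube n, (g (x + latv n m) - g (latv n m)) ∂μ)
          - ∫ x in cube n, (g (x + latv n m) - g (latv n m)) ∂volume| := by
          rw [hAeq, hBeq]; ring_nf
      _ ≤ |∫ x in cube n, (g (x + latv n m) - g (latv n m)) ∂μ|
          + |∫ x in cube n, (g (x + latv n m) - g (latv n m)) ∂volume| := abs_sub _ _
      _ ≤ 2 * δ' := by linarith
  -- cardinality bound
  have hcard : (T.card : ℝ) = (2 * (M:ℝ) + 1) ^ n := by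
    rw [hTdef, Fintype.card_piFinset]
    simp only [Int.card_Icc]
    rw [Finset.prod_const, Finset.card_univ, Fintype.card_fin, Nat.cast_pow]
    have h2 : (((M + 1 - -M).toNat : ℕ) : ℝ) = 2 * (M:ℝ) + 1 := by
      rw [← Int.cast_natCast (R := ℝ), Int.toNat_of_nonneg (by linarith)]
      push_cast; ring
    rw [h2]
  have hεM : ε * (2 * (M:ℝ) + 1) ≤ C := by
    have : ε * (2 * (M:ℝ) + 1) < ε * (2 * (R / ε + s + 1) + 1) := by
      refine (mul_lt_mul_iff_right₀ hε).2 ?_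
      linarith
    have heq : ε * (2 * (R / ε + s + 1) + 1) = 2 * R + 2 * ε * s + 3 * ε := by
      field_simp
      ring
    rw [heq] at this
    have : ε * (2 * (M:ℝ) + 1) < 2 * R + 2 * ε * s + 3 * ε := this
    nlinarith
  -- conclusion
  have hsumA : ∑' m, A m = ∑ m ∈ T, A m := tsum_eq_sum hA0
  have hsumB : ∑' m, B m = ∑ m ∈ T, B m := tsum_eq_sum hB0
  rw [Real.dist_eq, h1, h2, hdecμ, hdecL, hsumA, hsumB, ← mul_sub, ← Finset.sum_sub_distrib]
  have habs : |∑ m ∈ T, (A m - B m)| ≤ (T.card : ℝ) * (2 * δ') := by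
    calc |∑ m ∈ T, (A m - B m)| ≤ ∑ m ∈ T, |A m - B m| := Finset.abs_sum_le_sum_abs _ _
      _ ≤ ∑ _m ∈ T, 2 * δ' := Finset.sum_le_sum fun m _ => hAB m
      _ = (T.card : ℝ) * (2 * δ') := by rw [Finset.sum_const, nsmul_eq_mul]
  have hfinal : |ε ^ n * ∑ m ∈ T, (A m - B m)| ≤ C ^ n * (2 * δ') := by
    rw [abs_mul, abs_of_nonneg (pow_nonneg hε.le n)]
    calc ε ^ n * |∑ m ∈ T, (A m - B m)| ≤ ε ^ n * ((T.card : ℝ) * (2 * δ')) := by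
          exact mul_le_mul_of_nonneg_left habs (pow_nonneg hε.le n)
      _ = (ε ^ n * (T.card : ℝ)) * (2 * δ') := by ring
      _ ≤ C ^ n * (2 * δ') := by
          refine mul_le_mul_of_nonneg_right ?_ (by positivity)
          rw [hcard, ← mul_pow]
          exact pow_le_pow_left₀ (by positivity) hεM n
  refine lt_of_le_of_lt hfinal ?_
  have hCn : 0 < C ^ n := pow_pos hC0 n
  calc C ^ n * (2 * δ') = δ * (2 * C ^ n) / (2 * C ^ n + 1) := by rw [hδ'def]; ring
    _ < δ := by
      rw [div_lt_iff₀ (by positivity)]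
      nlinarith
end

section
/- Let u₁,u₂ ∈ L²(Ω;ℝ³) and let (u_ε)_{ε>0} be a bounded family in L²(Ω;ℝ³) such that ∫_{εE¹}|u_ε−u₁|²dx → 0 and ∫_{εE²}|u_ε−u₂|²dx → 0 as ε→0. Then u_ε converges weakly in L²(Ω;ℝ³) to (1−c)u₁ + c u₂, where c = π/16; that is, for every φ ∈ L²(Ω;ℝ³), ∫_Ω u_ε·φ dx → ∫_Ω ((1−c)u₁ + c u₂)·φ dx. -/
open MeasureTheory Real Filter Topology

noncomputable section

/-- The cross product on `ℝ³`. -/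
def cross3 (a b : EuclideanSpace ℝ (Fin 3)) : EuclideanSpace ℝ (Fin 3) :=
  WithLp.toLp 2 ![a 1 * b 2 - a 2 * b 1, a 2 * b 0 - a 0 * b 2, a 0 * b 1 - a 1 * b 0]

/-- The symmetric product `v ⊙ ν = ½(vνᵀ + νvᵀ)` of two vectors in `ℝ³`. -/
def symProd (v w : EuclideanSpace ℝ (Fin 3)) : Matrix (Fin 3) (Fin 3) ℝ :=
  fun i j => (v i * w j + w i * v j) / 2

/-- The squared Frobenius norm of a `3×3` matrix. -/
def frobSq (M : Matrix (Fin 3) (Fin 3) ℝ) : ℝ := ∑ i, ∑ j, (M i j) ^ 2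

/-- The projection `ℝ³ → ℝ²` on the first two coordinates. -/
def proj2 (x : EuclideanSpace ℝ (Fin 3)) : EuclideanSpace ℝ (Fin 2) := WithLp.toLp 2 ![x 0, x 1]

/-- The cylindrical domain `Ω = ω × (0,1) ⊂ ℝ³`. -/
def cylDomain (ω : Set (EuclideanSpace ℝ (Fin 2))) : Set (EuclideanSpace ℝ (Fin 3)) :=
  {x | proj2 x ∈ ω ∧ x 2 ∈ Set.Ioo (0 : ℝ) 1}

/-- The center `x_i = (εi₁ + ε/2, εi₂ + ε/2)` of the `i`-th disk. -/
def ctr (ε : ℝ) (i : ℤ × ℤ) : EuclideanSpace ℝ (Fin 2) :=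
  WithLp.toLp 2 ![ε * i.1 + ε / 2, ε * i.2 + ε / 2]

/-- The open cylinder `εE_i² = εD_i × (0,1)`, with `εD_i` the open disk of center `x_i`
and radius `ε/4`. -/
def cylE (ε : ℝ) (i : ℤ × ℤ) : Set (EuclideanSpace ℝ (Fin 3)) :=
  {x | proj2 x ∈ Metric.ball (ctr ε i) (ε / 4) ∧ x 2 ∈ Set.Ioo (0 : ℝ) 1}

/-- The lateral boundary `∂(εD_i) × (0,1)` of the `i`-th cylinder. -/
def latE (ε : ℝ) (i : ℤ × ℤ) : Set (EuclideanSpace ℝ (Fin 3)) :=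
  {x | proj2 x ∈ Metric.sphere (ctr ε i) (ε / 4) ∧ x 2 ∈ Set.Ioo (0 : ℝ) 1}

/-- The index set `I_ε = {i ∈ ℤ² : εE_i² ⊂ Ω}`. -/
def idx (ω : Set (EuclideanSpace ℝ (Fin 2))) (ε : ℝ) : Set (ℤ × ℤ) :=
  {i | cylE ε i ⊆ cylDomain ω}

/-- `εE² = ⋃_{i ∈ I_ε} εE_i²`. -/
def Etwo (ω : Set (EuclideanSpace ℝ (Fin 2))) (ε : ℝ) : Set (EuclideanSpace ℝ (Fin 3)) :=
  ⋃ i ∈ idx ω ε, cylE ε i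

/-- `εE¹ = Ω ∖ εE²`. -/
def Eone (ω : Set (EuclideanSpace ℝ (Fin 2))) (ε : ℝ) : Set (EuclideanSpace ℝ (Fin 3)) :=
  cylDomain ω \ Etwo ω ε

/-- The horizontal outward unit normal on the lateral boundary of the `i`-th cylinder. -/
def νlat (ε : ℝ) (i : ℤ × ℤ) (x : EuclideanSpace ℝ (Fin 3)) : EuclideanSpace ℝ (Fin 3) :=
  WithLp.toLp 2 ![(x 0 - ctr ε i 0) / ‖proj2 x - ctr ε i‖, (x 1 - ctr ε i 1) / ‖proj2 x - ctr ε i‖, 0]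

/-- The lateral surface energy `∫_{∂(εD_i)×(0,1)} |(α×x+β) ⊙ ν(x)|² d𝓗²` of the rigid
displacement `x ↦ α×x+β` on the `i`-th cylinder. -/
def latEnergy (ε : ℝ) (i : ℤ × ℤ) (α β : EuclideanSpace ℝ (Fin 3)) : ℝ :=
  ∫ x in latE ε i, frobSq (symProd (cross3 α x + β) (νlat ε i x)) ∂(μH[2])

end

namespace TwoScaleAux

noncomputable section
open Set

local notation "E2" => EuclideanSpace ℝ (Fin 2)
local notation "E3" => EuclideanSpace ℝ (Fin 3)
local notation "cst" => (π / 16 : ℝ)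

/-- Full periodic union of disks. -/
def Dper (ε : ℝ) : Set E2 := ⋃ i : ℤ × ℤ, Metric.ball (ctr ε i) (ε / 4)

/-- Full periodic set of vertical cylinders (no vertical or domain restriction). -/
def Pset (ε : ℝ) : Set E3 := {x | proj2 x ∈ Dper ε}

/-- 3D grid cell, defined through floors. -/
def cell3 (ε : ℝ) (j : (ℤ × ℤ) × ℤ) : Set E3 :=
  {x | ⌊x 0 / ε⌋ = j.1.1 ∧ ⌊x 1 / ε⌋ = j.1.2 ∧ ⌊x 2 / ε⌋ = j.2}

def center3 (ε : ℝ) (j : (ℤ × ℤ) × ℤ) : E3 :=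
  WithLp.toLp 2 ![ε * j.1.1 + ε / 2, ε * j.1.2 + ε / 2, ε * j.2 + ε / 2]

def cellOf (ε : ℝ) (x : E3) : (ℤ × ℤ) × ℤ := ((⌊x 0 / ε⌋, ⌊x 1 / ε⌋), ⌊x 2 / ε⌋)

lemma floor_div_eq_iff {ε t : ℝ} (hε : 0 < ε) {k : ℤ} :
    ⌊t / ε⌋ = k ↔ ε * k ≤ t ∧ t < ε * k + ε := by
  rw [Int.floor_eq_iff]
  constructor
  · rintro ⟨h1, h2⟩
    constructor
    · calc ε * k ≤ ε * (t / ε) := by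
            exact mul_le_mul_of_nonneg_left h1 hε.le
      _ = t := by field_simp
    · have := mul_lt_mul_of_pos_left h2 hε
      calc t = ε * (t / ε) := by field_simp
        _ < ε * (k + 1) := this
        _ = ε * k + ε := by ring
  · rintro ⟨h1, h2⟩
    constructor
    · rw [le_div_iff₀ hε]; linarith [h1]
    · rw [div_lt_iff₀ hε]; nlinarith [h2]

lemma continuous_apply3 (j : Fin 3) : Continuous (fun x : E3 => x j) :=
  (EuclideanSpace.proj (𝕜 := ℝ) j).continuous

lemma continuous_apply2 (j : Fin 2) : Continuous (fun x : E2 => x j) :=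
  (EuclideanSpace.proj (𝕜 := ℝ) j).continuous

lemma continuous_proj2 : Continuous proj2 := by
  have h : Continuous fun x : E3 => (![x 0, x 1] : Fin 2 → ℝ) := by
    refine continuous_pi ?_
    intro j
    fin_cases j
    · exact continuous_apply3 0
    · exact continuous_apply3 1
  exact (PiLp.continuous_toLp 2 (fun _ : Fin 2 => ℝ)).comp h

lemma vol_prod {A : Set E2} (hA : MeasurableSet A) {B : Set ℝ} (hB : MeasurableSet B) :
    volume {x : E3 | proj2 x ∈ A ∧ x 2 ∈ B} = volume A * volume B := by
  have e1 := (EuclideanSpace.volume_preserving_symm_measurableEquiv_toLp (Fin 3)).symm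
  have e2 := measurePreserving_piFinSuccAbove (fun _ : Fin 3 => (volume : Measure ℝ)) 2
  have e3 := (EuclideanSpace.volume_preserving_symm_measurableEquiv_toLp (Fin 2)).symm
  set A' : Set (Fin 2 → ℝ) := (MeasurableEquiv.toLp 2 (Fin 2 → ℝ)) ⁻¹' A with hA'
  have hA'm : MeasurableSet A' := (MeasurableEquiv.toLp 2 (Fin 2 → ℝ)).measurable hA
  have hvolA : volume A' = volume A := e3.measure_preimage hA.nullMeasurableSet
  have hset : (MeasurableEquiv.toLp 2 (Fin 3 → ℝ)) ⁻¹'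
      {x : E3 | proj2 x ∈ A ∧ x 2 ∈ B}
      = (MeasurableEquiv.piFinSuccAbove (fun _ : Fin 3 => ℝ) 2) ⁻¹' (B ×ˢ A') := by
    ext y
    simp only [Set.mem_preimage, Set.mem_setOf_eq, MeasurableEquiv.piFinSuccAbove,
      Set.mem_prod, hA']
    constructor
    · rintro ⟨h1, h2⟩
      refine ⟨h2, ?_⟩
      convert h1 using 2
      ext j
      fin_cases j <;> rfl
    · rintro ⟨h2, h1⟩
      refine ⟨?_, h2⟩
      convert h1 using 2
      ext j
      fin_cases j <;> rfl
  have hmS : MeasurableSet {x : E3 | proj2 x ∈ A ∧ x 2 ∈ B} :=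
    ((continuous_proj2.measurable hA).inter ((continuous_apply3 2).measurable hB))
  calc volume {x : E3 | proj2 x ∈ A ∧ x 2 ∈ B}
      = volume ((MeasurableEquiv.toLp 2 (Fin 3 → ℝ)) ⁻¹'
          {x : E3 | proj2 x ∈ A ∧ x 2 ∈ B}) := by
        exact (e1.measure_preimage hmS.nullMeasurableSet).symm
    _ = volume ((MeasurableEquiv.piFinSuccAbove (fun _ : Fin 3 => ℝ) 2) ⁻¹' (B ×ˢ A')) := by
        rw [hset]
    _ = ((volume : Measure ℝ).prod (Measure.pi fun _ : Fin 2 => volume)) (B ×ˢ A') := by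
        rw [volume_pi, e2.measure_preimage (hB.prod hA'm).nullMeasurableSet]
    _ = volume B * volume A' := by
        rw [Measure.prod_prod, volume_pi]
    _ = volume A * volume B := by rw [hvolA, mul_comm]

lemma coord_le_dist2 (x y : E2) (j : Fin 2) : |x j - y j| ≤ dist x y := by
  rw [EuclideanSpace.dist_eq]
  have h1 : |x j - y j| = Real.sqrt ((x j - y j) ^ 2) := (Real.sqrt_sq_eq_abs _).symm
  rw [h1]
  apply Real.sqrt_le_sqrt
  have : dist (x j) (y j) ^ 2 = (x j - y j) ^ 2 := by rw [Real.dist_eq, sq_abs]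
  rw [← this]
  exact Finset.single_le_sum (f := fun i => dist (x i) (y i) ^ 2)
    (fun i _ => sq_nonneg _) (Finset.mem_univ j)

lemma ctr_apply0 (ε : ℝ) (i : ℤ × ℤ) : ctr ε i 0 = ε * i.1 + ε / 2 := rfl
lemma ctr_apply1 (ε : ℝ) (i : ℤ × ℤ) : ctr ε i 1 = ε * i.2 + ε / 2 := rfl
lemma proj2_apply0 (x : E3) : proj2 x 0 = x 0 := rfl
lemma proj2_apply1 (x : E3) : proj2 x 1 = x 1 := rfl

/-- A point of the ball `εD_i` has floors `i`. -/
lemma ball_floor {ε : ℝ} (hε : 0 < ε) {i : ℤ × ℤ} {y : E2}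
    (hy : y ∈ Metric.ball (ctr ε i) (ε / 4)) :
    ⌊y 0 / ε⌋ = i.1 ∧ ⌊y 1 / ε⌋ = i.2 := by
  have h0 := (coord_le_dist2 y (ctr ε i) 0).trans_lt hy
  have h1 := (coord_le_dist2 y (ctr ε i) 1).trans_lt hy
  rw [ctr_apply0] at h0
  rw [ctr_apply1] at h1
  rw [abs_lt] at h0 h1
  constructor
  · rw [floor_div_eq_iff hε]; constructor <;> [linarith [h0.1]; linarith [h0.2]]
  · rw [floor_div_eq_iff hε]; constructor <;> [linarith [h1.1]; linarith [h1.2]]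

/-- Inside a 3D cell, the periodic set is exactly the cylinder over the ball of that cell. -/
lemma pset_inter_cell3 {ε : ℝ} (hε : 0 < ε) (j : (ℤ × ℤ) × ℤ) :
    Pset ε ∩ cell3 ε j
      = {x : E3 | proj2 x ∈ Metric.ball (ctr ε j.1) (ε / 4) ∧ x 2 ∈ Set.Ico (ε * j.2) (ε * j.2 + ε)} := by
  ext x
  constructor
  · rintro ⟨hx1, hx2, hx3, hx4⟩
    obtain ⟨_, ⟨i, rfl⟩, hball⟩ := hx1
    have hfl := ball_floor hε hball
    rw [proj2_apply0] at hfl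
    rw [proj2_apply1] at hfl
    have : i = j.1 := by
      have e1 : i.1 = j.1.1 := by rw [← hfl.1, hx2]
      have e2 : i.2 = j.1.2 := by rw [← hfl.2, hx3]
      exact Prod.ext e1 e2
    subst this
    exact ⟨hball, (floor_div_eq_iff hε).mp hx4⟩
  · rintro ⟨hball, hIco⟩
    have hfl := ball_floor hε hball
    rw [proj2_apply0] at hfl
    rw [proj2_apply1] at hfl
    exact ⟨Set.mem_iUnion.mpr ⟨j.1, hball⟩, hfl.1, hfl.2, (floor_div_eq_iff hε).mpr hIco⟩

/-- The 3D cell as a product set. -/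
lemma cell3_eq {ε : ℝ} (hε : 0 < ε) (j : (ℤ × ℤ) × ℤ) :
    cell3 ε j = {x : E3 |
      proj2 x ∈ {y : E2 | y 0 ∈ Set.Ico (ε * j.1.1) (ε * j.1.1 + ε) ∧
        y 1 ∈ Set.Ico (ε * j.1.2) (ε * j.1.2 + ε)} ∧ x 2 ∈ Set.Ico (ε * j.2) (ε * j.2 + ε)} := by
  ext x
  simp only [cell3, Set.mem_setOf_eq, proj2_apply0, proj2_apply1]
  rw [floor_div_eq_iff hε, floor_div_eq_iff hε, floor_div_eq_iff hε]
  constructor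
  · rintro ⟨a, b, c⟩; exact ⟨⟨a, b⟩, c⟩
  · rintro ⟨⟨a, b⟩, c⟩; exact ⟨a, b, c⟩

lemma volume_Ico' {a b : ℝ} : volume (Set.Ico a b) = ENNReal.ofReal (b - a) := by
  simp [Real.volume_Ico]

/-- Volume of the 2D cell square. -/
lemma volume_square {ε : ℝ} (i : ℤ × ℤ) :
    volume {y : E2 | y 0 ∈ Set.Ico (ε * i.1) (ε * i.1 + ε) ∧
      y 1 ∈ Set.Ico (ε * i.2) (ε * i.2 + ε)}
      = ENNReal.ofReal ε * ENNReal.ofReal ε := by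
  have e3 := (EuclideanSpace.volume_preserving_symm_measurableEquiv_toLp (Fin 2)).symm
  set S : Set E2 := {y : E2 | y 0 ∈ Set.Ico (ε * i.1) (ε * i.1 + ε) ∧
      y 1 ∈ Set.Ico (ε * i.2) (ε * i.2 + ε)} with hS
  have hmeas : MeasurableSet S :=
    ((continuous_apply2 0).measurable measurableSet_Ico).inter
      ((continuous_apply2 1).measurable measurableSet_Ico)
  have h1 : volume ((MeasurableEquiv.toLp 2 (Fin 2 → ℝ)) ⁻¹' S) = volume S :=
    e3.measure_preimage hmeas.nullMeasurableSet
  rw [← h1]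
  have h2 : (MeasurableEquiv.toLp 2 (Fin 2 → ℝ)) ⁻¹' S
      = Set.univ.pi ![Set.Ico (ε * i.1) (ε * i.1 + ε), Set.Ico (ε * i.2) (ε * i.2 + ε)] := by
    ext y
    simp only [Set.mem_preimage, hS, Set.mem_setOf_eq, Set.mem_univ_pi]
    constructor
    · rintro ⟨a, b⟩
      intro j
      fin_cases j
      · exact a
      · exact b
    · intro h
      exact ⟨h 0, h 1⟩
  rw [h2, volume_pi_pi]
  rw [Fin.prod_univ_two]
  simp only [Matrix.cons_val_zero, Matrix.cons_val_one, Matrix.head_cons]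
  rw [volume_Ico', volume_Ico']
  norm_num

lemma measurableSet_cell3 (ε : ℝ) (j : (ℤ × ℤ) × ℤ) : MeasurableSet (cell3 ε j) := by
  have m0 : Measurable fun x : E3 => ⌊x 0 / ε⌋ :=
    ((continuous_apply3 0).measurable.div_const ε).floor
  have m1 : Measurable fun x : E3 => ⌊x 1 / ε⌋ :=
    ((continuous_apply3 1).measurable.div_const ε).floor
  have m2 : Measurable fun x : E3 => ⌊x 2 / ε⌋ :=
    ((continuous_apply3 2).measurable.div_const ε).floor
  exact (m0 (measurableSet_singleton j.1.1)).inter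
    ((m1 (measurableSet_singleton j.1.2)).inter (m2 (measurableSet_singleton j.2)))

lemma isOpen_Dper (ε : ℝ) : IsOpen (Dper ε) :=
  isOpen_iUnion fun _ => Metric.isOpen_ball

lemma measurableSet_Pset (ε : ℝ) : MeasurableSet (Pset ε) :=
  continuous_proj2.measurable (isOpen_Dper ε).measurableSet

/-- Volume of the 3D cell. -/
lemma volume_cell3 {ε : ℝ} (hε : 0 < ε) (j : (ℤ × ℤ) × ℤ) :
    volume (cell3 ε j) = ENNReal.ofReal ε * ENNReal.ofReal ε * ENNReal.ofReal ε := by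
  rw [cell3_eq hε]
  have hsq : MeasurableSet {y : E2 | y 0 ∈ Set.Ico (ε * j.1.1) (ε * j.1.1 + ε) ∧
      y 1 ∈ Set.Ico (ε * j.1.2) (ε * j.1.2 + ε)} :=
    ((continuous_apply2 0).measurable measurableSet_Ico).inter
      ((continuous_apply2 1).measurable measurableSet_Ico)
  rw [vol_prod hsq measurableSet_Ico]
  rw [volume_square, volume_Ico']
  norm_num

/-- Volume of the periodic part of a 3D cell. -/
lemma volume_pset_cell3 {ε : ℝ} (hε : 0 < ε) (j : (ℤ × ℤ) × ℤ) :
    volume (Pset ε ∩ cell3 ε j)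
      = (ENNReal.ofReal (ε / 4)) ^ 2 * ENNReal.ofReal π * ENNReal.ofReal ε := by
  rw [pset_inter_cell3 hε]
  rw [vol_prod measurableSet_ball measurableSet_Ico]
  rw [EuclideanSpace.volume_ball, volume_Ico']
  have hcard : Fintype.card (Fin 2) = 2 := by simp
  rw [hcard]
  have : Real.sqrt π ^ 2 / Real.Gamma ((2 : ℕ) / 2 + 1) = π := by
    rw [Real.sq_sqrt Real.pi_nonneg]
    norm_num [Real.Gamma_two]
  rw [this]
  norm_num

/-- Real-valued volume identity: the periodic part of a cell occupies fraction `π/16`. -/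
lemma toReal_volume_pset_cell3 {ε : ℝ} (hε : 0 < ε) (j : (ℤ × ℤ) × ℤ) :
    (volume (Pset ε ∩ cell3 ε j)).toReal = cst * (volume (cell3 ε j)).toReal := by
  rw [volume_pset_cell3 hε, volume_cell3 hε]
  rw [ENNReal.toReal_mul, ENNReal.toReal_mul, ENNReal.toReal_mul, ENNReal.toReal_mul,
    ENNReal.toReal_pow]
  rw [ENNReal.toReal_ofReal (by positivity), ENNReal.toReal_ofReal Real.pi_nonneg,
    ENNReal.toReal_ofReal hε.le]
  ring

lemma mem_cell3_cellOf (ε : ℝ) (x : E3) : x ∈ cell3 ε (cellOf ε x) := ⟨rfl, rfl, rfl⟩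

lemma iUnion_cell3 (ε : ℝ) : (⋃ j, cell3 ε j) = Set.univ :=
  Set.eq_univ_of_forall fun x => Set.mem_iUnion.mpr ⟨cellOf ε x, mem_cell3_cellOf ε x⟩

lemma cell3_disjoint (ε : ℝ) : Pairwise (Function.onFun Disjoint (cell3 ε)) := by
  intro j k hjk
  rw [Function.onFun, Set.disjoint_left]
  rintro x ⟨a1, a2, a3⟩ ⟨b1, b2, b3⟩
  exact hjk (by
    apply Prod.ext
    · apply Prod.ext
      · rw [← a1, b1]
      · rw [← a2, b2]
    · rw [← a3, b3])

lemma cellOf_eq_of_mem {ε : ℝ} {x : E3} {j : (ℤ × ℤ) × ℤ} (hx : x ∈ cell3 ε j) :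
    cellOf ε x = j := by
  obtain ⟨a, b, c⟩ := hx
  exact Prod.ext (Prod.ext a b) c

lemma measurable_cellOf (ε : ℝ) : Measurable (cellOf ε) := by
  have m0 : Measurable fun x : E3 => ⌊x 0 / ε⌋ :=
    ((continuous_apply3 0).measurable.div_const ε).floor
  have m1 : Measurable fun x : E3 => ⌊x 1 / ε⌋ :=
    ((continuous_apply3 1).measurable.div_const ε).floor
  have m2 : Measurable fun x : E3 => ⌊x 2 / ε⌋ :=
    ((continuous_apply3 2).measurable.div_const ε).floor
  exact (m0.prodMk m1).prodMk m2

/-- The distance from a point to the center of its cell is at most `ε`. -/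
lemma dist_center3_le {ε : ℝ} (hε : 0 < ε) (x : E3) :
    dist x (center3 ε (cellOf ε x)) ≤ ε := by
  have key : ∀ j : Fin 3, dist (x j) (center3 ε (cellOf ε x) j) ≤ ε / 2 := by
    intro j
    have hfl : ∀ t : ℝ, ε * ⌊t / ε⌋ ≤ t ∧ t < ε * ⌊t / ε⌋ + ε := fun t =>
      (floor_div_eq_iff hε).mp rfl
    have : ∀ t : ℝ, |t - (ε * ⌊t / ε⌋ + ε / 2)| ≤ ε / 2 := by
      intro t
      obtain ⟨h1, h2⟩ := hfl t
      rw [abs_le]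
      constructor <;> linarith
    fin_cases j
    · exact (by simpa [Real.dist_eq, center3, cellOf] using this (x 0))
    · exact (by simpa [Real.dist_eq, center3, cellOf] using this (x 1))
    · exact (by simpa [Real.dist_eq, center3, cellOf] using this (x 2))
  rw [EuclideanSpace.dist_eq]
  have hsum : ∑ j : Fin 3, dist (x j) (center3 ε (cellOf ε x) j) ^ 2 ≤ 3 * (ε / 2) ^ 2 := by
    have : ∀ j : Fin 3, dist (x j) (center3 ε (cellOf ε x) j) ^ 2 ≤ (ε / 2) ^ 2 := by
      intro j
      have := key j
      nlinarith [dist_nonneg (x := x j) (y := center3 ε (cellOf ε x) j)]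
    calc ∑ j : Fin 3, dist (x j) (center3 ε (cellOf ε x) j) ^ 2
        ≤ ∑ _j : Fin 3, (ε / 2) ^ 2 := Finset.sum_le_sum fun j _ => this j
      _ = 3 * (ε / 2) ^ 2 := by simp [Fin.sum_univ_three]; try ring
  calc Real.sqrt (∑ j : Fin 3, dist (x j) (center3 ε (cellOf ε x) j) ^ 2)
      ≤ Real.sqrt (3 * (ε / 2) ^ 2) := Real.sqrt_le_sqrt hsum
    _ ≤ Real.sqrt (ε ^ 2) := by
        apply Real.sqrt_le_sqrt; nlinarith
    _ = ε := Real.sqrt_sq hε.le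

/-- The step approximation of `g` (value at the center of the cell). -/
def gstep (ε : ℝ) (g : E3 → ℝ) (x : E3) : ℝ := g (center3 ε (cellOf ε x))

lemma measurable_gstep (ε : ℝ) {g : E3 → ℝ} (hg : Continuous g) :
    Measurable (gstep ε g) := by
  have : Measurable (fun j : (ℤ × ℤ) × ℤ => g (center3 ε j)) := measurable_of_countable _
  exact this.comp (measurable_cellOf ε)

/-- The indicator-minus-constant integrand. -/
def chi (ε : ℝ) (x : E3) : ℝ := (Pset ε).indicator (fun _ => (1 : ℝ)) x

lemma chi_measurable (ε : ℝ) : Measurable (chi ε) :=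
  measurable_const.indicator (measurableSet_Pset ε)

lemma abs_chi_sub_le (ε : ℝ) (x : E3) : |chi ε x - cst| ≤ 1 := by
  have h1 : (0:ℝ) ≤ cst := by positivity
  have h2 : cst ≤ 1 := by
    have := Real.pi_le_four
    rw [div_le_one (by norm_num)]
    linarith
  have hv : chi ε x = 1 ∨ chi ε x = 0 := by
    by_cases hx : x ∈ Pset ε
    · left; simp [chi, hx]
    · right; simp [chi, hx]
  rcases hv with h | h <;> rw [h, abs_le] <;> constructor <;> linarith

lemma gstep_support {ε : ℝ} (hε : 0 < ε) {g : E3 → ℝ} {x : E3}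
    (hx : gstep ε g x ≠ 0) : x ∈ Metric.cthickening ε (tsupport g) := by
  have hc : center3 ε (cellOf ε x) ∈ tsupport g := subset_tsupport g hx
  exact Metric.mem_cthickening_of_dist_le x _ ε _ hc (dist_center3_le hε x)

/-- Integrability of `(χ - c) ⬝ gstep`. -/
lemma integrable_chi_gstep {ε : ℝ} (hε : 0 < ε) {g : E3 → ℝ} (hg : Continuous g)
    (hgs : HasCompactSupport g) :
    Integrable (fun x => (chi ε x - cst) * gstep ε g x) volume := by
  obtain ⟨C, hC⟩ : ∃ C, ∀ y, |g y| ≤ C := by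
    obtain ⟨C, hC⟩ := (hg.norm.bddAbove_range_of_hasCompactSupport hgs.norm).exists_ge 0
    exact ⟨C, fun y => hC.2 _ ⟨y, rfl⟩⟩
  set K := Metric.cthickening ε (tsupport g) with hK
  have hKc : IsCompact K := hgs.cthickening
  have hmeas : AEStronglyMeasurable (fun x => (chi ε x - cst) * gstep ε g x) volume :=
    (((chi_measurable ε).sub measurable_const).mul (measurable_gstep ε hg)).aestronglyMeasurable
  refine Integrable.mono' (g := K.indicator fun _ => C) ?_ hmeas ?_
  · exact (integrable_indicator_iff hKc.measurableSet).mpr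
      ((integrableOn_const_iff).mpr (Or.inr hKc.measure_lt_top))
  · refine Filter.Eventually.of_forall fun x => ?_
    by_cases hxK : x ∈ K
    · rw [Set.indicator_of_mem hxK, Real.norm_eq_abs, abs_mul]
      have h1 := abs_chi_sub_le ε x
      have h2 : |gstep ε g x| ≤ C := hC _
      nlinarith [abs_nonneg (chi ε x - cst), abs_nonneg (gstep ε g x)]
    · have hzero : gstep ε g x = 0 := by
        by_contra h
        exact hxK (gstep_support hε h)
      rw [Set.indicator_of_notMem hxK, hzero, mul_zero, norm_zero]

/-- On each cell, the integral of `(χ - c)` vanishes. -/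
lemma cell_integral_zero {ε : ℝ} (hε : 0 < ε) (j : (ℤ × ℤ) × ℤ) :
    ∫ x in cell3 ε j, (chi ε x - cst) = 0 := by
  have hfin : volume (cell3 ε j) < ⊤ := by
    rw [volume_cell3 hε]
    exact ENNReal.mul_lt_top (ENNReal.mul_lt_top ENNReal.ofReal_lt_top ENNReal.ofReal_lt_top)
      ENNReal.ofReal_lt_top
  have hint1 : IntegrableOn (chi ε) (cell3 ε j) volume := by
    refine Integrable.mono' (g := fun _ => (1:ℝ)) ?_
      (chi_measurable ε).aestronglyMeasurable.restrict ?_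
    · exact (integrableOn_const_iff).mpr (Or.inr hfin)
    · refine Filter.Eventually.of_forall fun x => ?_
      by_cases hx : x ∈ Pset ε <;> simp [chi, hx]
  have hint2 : IntegrableOn (fun _ => cst) (cell3 ε j) volume :=
    (integrableOn_const_iff).mpr (Or.inr hfin)
  rw [integral_sub hint1 hint2]
  have h1 : ∫ x in cell3 ε j, chi ε x = (volume (Pset ε ∩ cell3 ε j)).toReal := by
    rw [show (chi ε) = (Pset ε).indicator (fun _ => (1:ℝ)) from rfl]
    rw [setIntegral_indicator (measurableSet_Pset ε)]
    rw [setIntegral_const, Set.inter_comm]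
    simp [Measure.real]
  have h2 : ∫ _x in cell3 ε j, cst = cst * (volume (cell3 ε j)).toReal := by
    rw [setIntegral_const]; rw [smul_eq_mul, mul_comm]; rfl
  rw [h1, h2, toReal_volume_pset_cell3 hε]
  ring

/-- The global integral against the step function vanishes. -/
lemma integral_chi_gstep_zero {ε : ℝ} (hε : 0 < ε) {g : E3 → ℝ} (hg : Continuous g)
    (hgs : HasCompactSupport g) :
    ∫ x, (chi ε x - cst) * gstep ε g x = 0 := by
  have hint := integrable_chi_gstep hε hg hgs
  have h1 : ∫ x, (chi ε x - cst) * gstep ε g x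
      = ∫ x in ⋃ j, cell3 ε j, (chi ε x - cst) * gstep ε g x := by
    rw [iUnion_cell3, Measure.restrict_univ]
  rw [h1, integral_iUnion (measurableSet_cell3 ε) (cell3_disjoint ε)
    (by rw [iUnion_cell3]; exact hint.integrableOn)]
  have hzero : ∀ j : (ℤ × ℤ) × ℤ, ∫ x in cell3 ε j, (chi ε x - cst) * gstep ε g x = 0 := by
    intro j
    have hcongr : ∀ x ∈ cell3 ε j,
        (chi ε x - cst) * gstep ε g x = (chi ε x - cst) * g (center3 ε j) := by
      intro x hx
      rw [gstep, cellOf_eq_of_mem hx]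
    rw [setIntegral_congr_fun (measurableSet_cell3 ε j) hcongr]
    rw [integral_mul_const, cell_integral_zero hε j, zero_mul]
  rw [tsum_congr hzero, tsum_zero]

/-- Weak convergence of the periodic indicator against continuous compactly supported `g`. -/
lemma tendsto_pset_cont {g : E3 → ℝ} (hg : Continuous g) (hgs : HasCompactSupport g) :
    Filter.Tendsto (fun ε : ℝ => ∫ x in Pset ε, g x) (nhdsWithin 0 (Set.Ioi 0))
      (nhds (cst * ∫ x, g x)) := by
  rw [Metric.tendsto_nhdsWithin_nhds]
  intro η hη
  set K := Metric.cthickening 1 (tsupport g) with hKdef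
  have hKc : IsCompact K := hgs.cthickening
  set V := (volume K).toReal with hVdef
  have hV0 : (0:ℝ) ≤ V := ENNReal.toReal_nonneg
  set η' := η / (2 * (V + 1)) with hη'def
  have hη'0 : 0 < η' := by positivity
  have hUC : UniformContinuous g := hgs.uniformContinuous_of_continuous hg
  rw [Metric.uniformContinuous_iff] at hUC
  obtain ⟨δ₀, hδ₀, hδ⟩ := hUC η' hη'0
  refine ⟨min 1 (δ₀ / 2), by positivity, ?_⟩
  intro ε hεIoi hdist
  have hε0 : (0:ℝ) < ε := hεIoi
  rw [Real.dist_eq, sub_zero, abs_of_pos hε0] at hdist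
  have hε1 : ε ≤ 1 := le_of_lt (lt_of_lt_of_le hdist (min_le_left _ _))
  have hεδ : ε < δ₀ := lt_of_lt_of_le hdist ((min_le_right _ _).trans (by linarith))
  have gint : Integrable g volume := hg.integrable_of_hasCompactSupport hgs
  have hχg_int : Integrable (fun x => chi ε x * g x) volume :=
    gint.bdd_mul (c := 1) (chi_measurable ε).aestronglyMeasurable
      (Filter.Eventually.of_forall fun x => by
        rw [Real.norm_eq_abs]
        by_cases hx : x ∈ Pset ε <;> simp [chi, hx])
  have hPg : ∫ x in Pset ε, g x = ∫ x, chi ε x * g x := by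
    rw [← integral_indicator (measurableSet_Pset ε)]
    congr 1
    funext x
    by_cases hx : x ∈ Pset ε <;> simp [chi, hx]
  set D := ∫ x, (chi ε x - cst) * (g x - gstep ε g x) with hDdef
  have hD : D = (∫ x, chi ε x * g x) - cst * ∫ x, g x := by
    have heq : (fun x => (chi ε x - cst) * (g x - gstep ε g x))
        = fun x => (chi ε x * g x - cst * g x) - (chi ε x - cst) * gstep ε g x := by
      funext x; ring
    have hint1 : Integrable (fun x => chi ε x * g x - cst * g x) volume :=
      hχg_int.sub (gint.const_mul cst)
    have hint2 : Integrable (fun x => cst * g x) volume := gint.const_mul cst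
    rw [hDdef, heq, integral_sub hint1 (integrable_chi_gstep hε0 hg hgs),
      integral_chi_gstep_zero hε0 hg hgs, sub_zero,
      integral_sub hχg_int hint2, integral_const_mul]
  have hbound : |D| ≤ η' * V := by
    have hb : ∀ x, ‖(chi ε x - cst) * (g x - gstep ε g x)‖
        ≤ K.indicator (fun _ => η') x := by
      intro x
      by_cases hxK : x ∈ K
      · rw [Set.indicator_of_mem hxK, Real.norm_eq_abs, abs_mul]
        have h1 := abs_chi_sub_le ε x
        have h2 : |g x - gstep ε g x| ≤ η' := by
          have hd : dist x (center3 ε (cellOf ε x)) ≤ ε := dist_center3_le hε0 x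
          have := hδ (a := x) (b := center3 ε (cellOf ε x)) (lt_of_le_of_lt hd hεδ)
          rw [Real.dist_eq] at this
          exact le_of_lt this
        nlinarith [abs_nonneg (chi ε x - cst), abs_nonneg (g x - gstep ε g x)]
      · have hg0 : g x = 0 := by
          by_contra h
          exact hxK (Metric.self_subset_cthickening _ (subset_tsupport g h))
        have hgs0 : gstep ε g x = 0 := by
          by_contra h
          exact hxK (Metric.cthickening_mono hε1 _ (gstep_support hε0 h))
        rw [Set.indicator_of_notMem hxK, hg0, hgs0, sub_zero, mul_zero, norm_zero]
    have hbi : Integrable (K.indicator fun _ => η') volume :=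
      (integrable_indicator_iff hKc.measurableSet).mpr
        ((integrableOn_const_iff).mpr (Or.inr hKc.measure_lt_top))
    calc |D| ≤ ∫ x, K.indicator (fun _ => η') x :=
          norm_integral_le_of_norm_le hbi (Filter.Eventually.of_forall hb)
      _ = V * η' := by rw [integral_indicator_const _ hKc.measurableSet]; simp [hVdef, Measure.real]
      _ = η' * V := mul_comm _ _
  have hlt : η' * V < η := by
    have h1 : η' * V ≤ η' * (V + 1) := by nlinarith
    have h2 : η' * (V + 1) = η / 2 := by
      rw [hη'def]; field_simp
    linarith
  rw [Real.dist_eq, hPg, ← hD]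
  exact lt_of_le_of_lt (by simpa using hbound) hlt

/-- Weak convergence of the periodic indicator against an arbitrary `L¹` function. -/
lemma tendsto_pset_L1 {f : E3 → ℝ} (hf : Integrable f volume) :
    Filter.Tendsto (fun ε : ℝ => ∫ x in Pset ε, f x) (nhdsWithin 0 (Set.Ioi 0))
      (nhds (cst * ∫ x, f x)) := by
  rw [Metric.tendsto_nhds]
  intro η hη
  obtain ⟨g, hgs, hL1, hg, hgint⟩ :=
    hf.exists_hasCompactSupport_integral_sub_le (show (0:ℝ) < η / 4 by positivity)
  have hc1 : (0:ℝ) ≤ cst := by positivity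
  have hc2 : cst ≤ 1 := by
    have := Real.pi_le_four
    rw [div_le_one (by norm_num)]
    linarith
  have hmain := tendsto_pset_cont hg hgs
  rw [Metric.tendsto_nhds] at hmain
  filter_upwards [hmain (η / 4) (by positivity)] with ε hεg
  have hfg : ∫ x, ‖f x - g x‖ ≤ η / 4 := hL1
  have h1 : dist (∫ x in Pset ε, f x) (∫ x in Pset ε, g x) ≤ η / 4 := by
    rw [Real.dist_eq, ← integral_sub hf.integrableOn hgint.integrableOn, ← Real.norm_eq_abs]
    calc ‖∫ x in Pset ε, (f x - g x)‖ ≤ ∫ x in Pset ε, ‖f x - g x‖ :=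
          norm_integral_le_integral_norm _
      _ ≤ ∫ x, ‖f x - g x‖ :=
          setIntegral_le_integral (hf.sub hgint).norm
            (Filter.Eventually.of_forall fun x => norm_nonneg _)
      _ ≤ η / 4 := hfg
  have h2 : dist (cst * ∫ x, g x) (cst * ∫ x, f x) ≤ η / 4 := by
    rw [Real.dist_eq, ← mul_sub, abs_mul, ← integral_sub hgint hf]
    have hni : ‖∫ x, (g x - f x)‖ ≤ ∫ x, ‖g x - f x‖ := norm_integral_le_integral_norm _
    rw [Real.norm_eq_abs] at hni
    calc |cst| * |∫ x, (g x - f x)| ≤ 1 * ∫ x, ‖g x - f x‖ :=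
          mul_le_mul (by rwa [abs_of_nonneg hc1]) hni (abs_nonneg _) zero_le_one
      _ = ∫ x, ‖f x - g x‖ := by
          rw [one_mul]
          congr 1
          funext x
          rw [norm_sub_rev]
      _ ≤ η / 4 := hfg
  calc dist (∫ x in Pset ε, f x) (cst * ∫ x, f x)
      ≤ dist (∫ x in Pset ε, f x) (∫ x in Pset ε, g x)
        + dist (∫ x in Pset ε, g x) (cst * ∫ x, g x)
        + dist (cst * ∫ x, g x) (cst * ∫ x, f x) := dist_triangle4 _ _ _ _
    _ < η / 4 + η / 4 + η / 4 := by
        apply add_lt_add_of_lt_of_le (add_lt_add_of_le_of_lt h1 hεg) h2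
    _ < η := by linarith

/-- The boundary layer near `∂ω`. -/
def badset (ω : Set E2) (ε : ℝ) : Set E3 :=
  {x : E3 | proj2 x ∈ ω ∩ Metric.thickening (ε / 2) ωᶜ ∧ x 2 ∈ Set.Ioo (0:ℝ) 1}

lemma tendsto_volume_badset {ω : Set E2} (hω : IsOpen ω) (hωb : Bornology.IsBounded ω) :
    Filter.Tendsto (fun ε : ℝ => volume (badset ω ε)) (nhdsWithin 0 (Set.Ioi 0))
      (nhds 0) := by
  set s : ℕ → Set E2 := fun n => ω ∩ Metric.thickening (1 / (n + 1)) ωᶜ with hs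
  have hsm : ∀ n, MeasurableSet (s n) :=
    fun n => (hω.measurableSet).inter (Metric.isOpen_thickening).measurableSet
  have hanti : Antitone s := by
    intro m n hmn
    apply Set.inter_subset_inter_right
    apply Metric.thickening_mono
    apply one_div_le_one_div_of_le (by positivity)
    linarith [(Nat.cast_le (α := ℝ)).mpr hmn]
  have hiInter : (⋂ n, s n) = ∅ := by
    rw [Set.eq_empty_iff_forall_notMem]
    intro y hy
    have hyω : y ∈ ω := (Set.mem_iInter.mp hy 0).1
    obtain ⟨r, hr, hball⟩ := Metric.isOpen_iff.mp hω y hyω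
    obtain ⟨n, hn⟩ := exists_nat_one_div_lt hr
    have := (Set.mem_iInter.mp hy n).2
    rw [Metric.mem_thickening_iff] at this
    obtain ⟨z, hz, hdz⟩ := this
    exact hz (hball (by
      rw [Metric.mem_ball, dist_comm]
      calc dist y z < 1 / (n + 1) := hdz
        _ < r := hn))
  have hfin : volume (s 0) ≠ ⊤ :=
    ((measure_mono Set.inter_subset_left).trans_lt hωb.measure_lt_top).ne
  have hseq : Filter.Tendsto (fun n => volume (s n)) Filter.atTop (nhds 0) := by
    have := tendsto_measure_iInter_atTop (μ := volume)
      (fun n => (hsm n).nullMeasurableSet) hanti ⟨0, hfin⟩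
    rwa [hiInter, measure_empty] at this
  rw [ENNReal.tendsto_nhds_zero]
  intro η hη
  obtain ⟨N, hN⟩ := (ENNReal.tendsto_nhds_zero.mp hseq η hη).exists
  have hNpos : (0:ℝ) < 1 / (N + 1) := by positivity
  filter_upwards [Ioo_mem_nhdsGT_of_mem (Set.mem_Ico.mpr ⟨le_refl 0, hNpos⟩)] with ε hε
  have hsub : badset ω ε ⊆ {x : E3 | proj2 x ∈ s N ∧ x 2 ∈ Set.Ioo (0:ℝ) 1} := by
    intro x hx
    refine ⟨⟨hx.1.1, ?_⟩, hx.2⟩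
    apply Metric.thickening_mono (by linarith [hε.1, hε.2] : ε / 2 ≤ 1 / (N + 1))
    exact hx.1.2
  calc volume (badset ω ε) ≤ volume {x : E3 | proj2 x ∈ s N ∧ x 2 ∈ Set.Ioo (0:ℝ) 1} :=
        measure_mono hsub
    _ = volume (s N) * volume (Set.Ioo (0:ℝ) 1) := vol_prod (hsm N) measurableSet_Ioo
    _ = volume (s N) := by simp [Real.volume_Ioo]
    _ ≤ η := hN

lemma isOpen_cylDomain {ω : Set E2} (hω : IsOpen ω) : IsOpen (cylDomain ω) := by
  have : cylDomain ω = proj2 ⁻¹' ω ∩ (fun x : E3 => x 2) ⁻¹' (Set.Ioo (0:ℝ) 1) := rfl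
  rw [this]
  exact (hω.preimage continuous_proj2).inter (isOpen_Ioo.preimage (continuous_apply3 2))

lemma isOpen_cylE (ε : ℝ) (i : ℤ × ℤ) : IsOpen (cylE ε i) := by
  have : cylE ε i = proj2 ⁻¹' (Metric.ball (ctr ε i) (ε / 4))
      ∩ (fun x : E3 => x 2) ⁻¹' (Set.Ioo (0:ℝ) 1) := rfl
  rw [this]
  exact (Metric.isOpen_ball.preimage continuous_proj2).inter
    (isOpen_Ioo.preimage (continuous_apply3 2))

lemma isOpen_Etwo (ω : Set E2) (ε : ℝ) : IsOpen (Etwo ω ε) :=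
  isOpen_biUnion fun i _ => isOpen_cylE ε i

lemma Etwo_subset (ω : Set E2) (ε : ℝ) : Etwo ω ε ⊆ cylDomain ω :=
  Set.iUnion₂_subset fun _ hi => hi

lemma Etwo_subset_pset (ω : Set E2) (ε : ℝ) : Etwo ω ε ⊆ Pset ε := by
  rintro x hx
  obtain ⟨_, ⟨i, rfl⟩, hx⟩ := hx
  obtain ⟨_, ⟨hi, rfl⟩, hball, _⟩ := hx
  exact Set.mem_iUnion.mpr ⟨i, hball⟩

lemma diff_subset_badset (ω : Set E2) (ε : ℝ) :
    (Pset ε ∩ cylDomain ω) \ Etwo ω ε ⊆ badset ω ε := by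
  rintro x ⟨⟨hP, hΩ⟩, hnot⟩
  obtain ⟨_, ⟨i, rfl⟩, hball⟩ := hP
  by_cases hidx : Metric.ball (ctr ε i) (ε / 4) ⊆ ω
  · exfalso
    apply hnot
    have hiidx : i ∈ idx ω ε := fun y hy => ⟨hidx hy.1, hy.2⟩
    exact Set.mem_biUnion hiidx ⟨hball, hΩ.2⟩
  · obtain ⟨z, hz1, hz2⟩ := Set.not_subset.mp hidx
    refine ⟨⟨hΩ.1, Metric.mem_thickening_iff.mpr ⟨z, hz2, ?_⟩⟩, hΩ.2⟩
    calc dist (proj2 x) z ≤ dist (proj2 x) (ctr ε i) + dist (ctr ε i) z := dist_triangle _ _ _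
      _ < ε / 4 + ε / 4 := by
          apply add_lt_add hball
          rw [dist_comm]
          exact hz1
      _ = ε / 2 := by ring

/-- The homogenization limit: for any `L¹(Ω)` function, the integral over `εE²`
converges to `π/16` times the integral over `Ω`. -/
lemma key_tendsto {ω : Set E2} (hω : IsOpen ω) (hωb : Bornology.IsBounded ω)
    {h : E3 → ℝ} (hh : Integrable h (volume.restrict (cylDomain ω))) :
    Filter.Tendsto (fun ε : ℝ => ∫ x in Etwo ω ε, h x) (nhdsWithin 0 (Set.Ioi 0))
      (nhds (cst * ∫ x in cylDomain ω, h x)) := by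
  have hΩm : MeasurableSet (cylDomain ω) := (isOpen_cylDomain hω).measurableSet
  set f : E3 → ℝ := (cylDomain ω).indicator h with hfdef
  have hfint : Integrable f volume := (integrable_indicator_iff hΩm).mpr hh
  have h1 : ∀ ε : ℝ, ∫ x in Etwo ω ε, h x
      = (∫ x in Pset ε, f x) - ∫ x in (Pset ε ∩ cylDomain ω) \ Etwo ω ε, f x := by
    intro ε
    have hEm : MeasurableSet (Etwo ω ε) := (isOpen_Etwo ω ε).measurableSet
    have hPΩm : MeasurableSet (Pset ε ∩ cylDomain ω) := (measurableSet_Pset ε).inter hΩm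
    have hsub1 : Etwo ω ε ⊆ Pset ε ∩ cylDomain ω :=
      Set.subset_inter (Etwo_subset_pset ω ε) (Etwo_subset ω ε)
    have hh' : IntegrableOn h (cylDomain ω) volume := hh
    have hIPΩ : IntegrableOn h (Pset ε ∩ cylDomain ω) volume :=
      hh'.mono_set Set.inter_subset_right
    have e1 : ∫ x in Pset ε, f x = ∫ x in Pset ε ∩ cylDomain ω, h x :=
      setIntegral_indicator hΩm
    have e2 : ∫ x in (Pset ε ∩ cylDomain ω) \ Etwo ω ε, h x
        = (∫ x in Pset ε ∩ cylDomain ω, h x) - ∫ x in Etwo ω ε, h x :=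
      integral_diff hEm hIPΩ hsub1
    have e3 : ∫ x in (Pset ε ∩ cylDomain ω) \ Etwo ω ε, f x
        = ∫ x in (Pset ε ∩ cylDomain ω) \ Etwo ω ε, h x := by
      apply setIntegral_congr_fun (hPΩm.diff hEm)
      intro x hx
      exact Set.indicator_of_mem hx.1.2 h
    rw [e1, e3, e2]
    ring
  have h2 : Filter.Tendsto (fun ε : ℝ => ∫ x in Pset ε, f x) (nhdsWithin 0 (Set.Ioi 0))
      (nhds (cst * ∫ x in cylDomain ω, h x)) := by
    have := tendsto_pset_L1 hfint
    rwa [integral_indicator hΩm] at this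
  have h3 : Filter.Tendsto (fun ε : ℝ => ∫ x in (Pset ε ∩ cylDomain ω) \ Etwo ω ε, f x)
      (nhdsWithin 0 (Set.Ioi 0)) (nhds 0) := by
    apply hfint.tendsto_setIntegral_nhds_zero
    apply tendsto_of_tendsto_of_tendsto_of_le_of_le tendsto_const_nhds
      (tendsto_volume_badset hω hωb)
    · intro ε; exact zero_le
    · intro ε; exact measure_mono (diff_subset_badset ω ε)
  have := h2.sub h3
  rw [sub_zero] at this
  exact this.congr fun ε => (h1 ε).symm

lemma integrable_inner_of_memL2 {α : Type*} [MeasurableSpace α] {μ : Measure α}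
    {v w : α → EuclideanSpace ℝ (Fin 3)} (hv : MemLp v 2 μ) (hw : MemLp w 2 μ) :
    Integrable (fun x => @inner ℝ _ _ (v x) (w x)) μ := by
  have hm : AEStronglyMeasurable (fun x => @inner ℝ _ _ (v x) (w x)) μ := hv.1.inner hw.1
  have hv2 : Integrable (fun x => ‖v x‖ ^ 2) μ := (memLp_two_iff_integrable_sq_norm hv.1).mp hv
  have hw2 : Integrable (fun x => ‖w x‖ ^ 2) μ := (memLp_two_iff_integrable_sq_norm hw.1).mp hw
  refine Integrable.mono' (hv2.add hw2) hm (Filter.Eventually.of_forall fun x => ?_)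
  simp only [Pi.add_apply]
  have h1 : ‖@inner ℝ _ _ (v x) (w x)‖ ≤ ‖v x‖ * ‖w x‖ := norm_inner_le_norm _ _
  have h2 : ‖v x‖ * ‖w x‖ ≤ ‖v x‖ ^ 2 + ‖w x‖ ^ 2 := by
    nlinarith [norm_nonneg (v x), norm_nonneg (w x), sq_nonneg (‖v x‖ - ‖w x‖)]
  calc ‖@inner ℝ _ _ (v x) (w x)‖ ≤ ‖v x‖ * ‖w x‖ := h1
    _ ≤ ‖v x‖ ^ 2 + ‖w x‖ ^ 2 := h2

lemma abs_integral_inner_le {α : Type*} [MeasurableSpace α] {μ : Measure α}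
    {v w : α → EuclideanSpace ℝ (Fin 3)} (hv : MemLp v 2 μ) (hw : MemLp w 2 μ) :
    |∫ x, @inner ℝ _ _ (v x) (w x) ∂μ|
      ≤ Real.sqrt (∫ x, ‖v x‖ ^ 2 ∂μ) * Real.sqrt (∫ x, ‖w x‖ ^ 2 ∂μ) := by
  have hpq : Real.HolderConjugate 2 2 := Real.HolderConjugate.two_two
  have hv' : MemLp v (ENNReal.ofReal 2) μ := by
    convert hv using 2
    norm_num
  have hw' : MemLp w (ENNReal.ofReal 2) μ := by
    convert hw using 2
    norm_num
  have hHolder := integral_mul_norm_le_Lp_mul_Lq hpq hv' hw'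
  have hconv1 : (∫ x, ‖v x‖ ^ (2:ℝ) ∂μ) = ∫ x, ‖v x‖ ^ 2 ∂μ := by
    congr 1
    funext x
    rw [show (2:ℝ) = ((2:ℕ):ℝ) by norm_num, Real.rpow_natCast]
  have hconv2 : (∫ x, ‖w x‖ ^ (2:ℝ) ∂μ) = ∫ x, ‖w x‖ ^ 2 ∂μ := by
    congr 1
    funext x
    rw [show (2:ℝ) = ((2:ℕ):ℝ) by norm_num, Real.rpow_natCast]
  rw [hconv1, hconv2] at hHolder
  have hmul : Integrable (fun x => ‖v x‖ * ‖w x‖) μ := by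
    have hv2 : Integrable (fun x => ‖v x‖ ^ 2) μ := (memLp_two_iff_integrable_sq_norm hv.1).mp hv
    have hw2 : Integrable (fun x => ‖w x‖ ^ 2) μ := (memLp_two_iff_integrable_sq_norm hw.1).mp hw
    refine Integrable.mono' (hv2.add hw2) (hv.1.norm.mul hw.1.norm)
      (Filter.Eventually.of_forall fun x => ?_)
    simp only [Pi.add_apply]
    have h2 : ‖v x‖ * ‖w x‖ ≤ ‖v x‖ ^ 2 + ‖w x‖ ^ 2 := by
      nlinarith [sq_nonneg (‖v x‖ - ‖w x‖)]
    calc ‖‖v x‖ * ‖w x‖‖ = ‖v x‖ * ‖w x‖ := by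
          rw [Real.norm_eq_abs, abs_of_nonneg (by positivity)]
      _ ≤ ‖v x‖ ^ 2 + ‖w x‖ ^ 2 := h2
  calc |∫ x, @inner ℝ _ _ (v x) (w x) ∂μ| ≤ ∫ x, ‖@inner ℝ _ _ (v x) (w x)‖ ∂μ := by
        rw [← Real.norm_eq_abs]
        exact norm_integral_le_integral_norm _
    _ ≤ ∫ x, ‖v x‖ * ‖w x‖ ∂μ := by
        apply integral_mono (integrable_inner_of_memL2 hv hw).norm hmul
        intro x
        exact norm_inner_le_norm _ _
    _ ≤ (∫ x, ‖v x‖ ^ 2 ∂μ) ^ ((1:ℝ) / 2) * (∫ x, ‖w x‖ ^ 2 ∂μ) ^ ((1:ℝ) / 2) := hHolder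
    _ = Real.sqrt (∫ x, ‖v x‖ ^ 2 ∂μ) * Real.sqrt (∫ x, ‖w x‖ ^ 2 ∂μ) := by
        rw [Real.sqrt_eq_rpow, Real.sqrt_eq_rpow]

end
end TwoScaleAux

open scoped RealInnerProductSpace

/-- If a bounded family `(u_ε) ⊂ L²(Ω;ℝ³)` satisfies
`∫_{εE¹}|u_ε−u₁|² → 0` and `∫_{εE²}|u_ε−u₂|² → 0`, then `u_ε ⇀ (1−c)u₁ + cu₂` weakly in
`L²(Ω;ℝ³)`, where `c = π/16`. -/
theorem two_scale_limit_weak_L2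
    (ω : Set (EuclideanSpace ℝ (Fin 2))) (hω : IsOpen ω) (hωconn : IsConnected ω)
    (hωb : Bornology.IsBounded ω)
    (u₁ u₂ : EuclideanSpace ℝ (Fin 3) → EuclideanSpace ℝ (Fin 3))
    (hu₁ : MemLp u₁ 2 (volume.restrict (cylDomain ω)))
    (hu₂ : MemLp u₂ 2 (volume.restrict (cylDomain ω)))
    (u : ℝ → EuclideanSpace ℝ (Fin 3) → EuclideanSpace ℝ (Fin 3))
    (huL2 : ∀ ε : ℝ, 0 < ε → MemLp (u ε) 2 (volume.restrict (cylDomain ω)))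
    (hbdd : ∃ M : ℝ, ∀ ε : ℝ, 0 < ε → ∫ x in cylDomain ω, ‖u ε x‖ ^ 2 ≤ M)
    (hconv1 : Tendsto (fun ε : ℝ => ∫ x in Eone ω ε, ‖u ε x - u₁ x‖ ^ 2) (𝓝[>] (0 : ℝ))
      (𝓝 (0 : ℝ)))
    (hconv2 : Tendsto (fun ε : ℝ => ∫ x in Etwo ω ε, ‖u ε x - u₂ x‖ ^ 2) (𝓝[>] (0 : ℝ))
      (𝓝 (0 : ℝ))) :
    ∀ φ : EuclideanSpace ℝ (Fin 3) → EuclideanSpace ℝ (Fin 3),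
      MemLp φ 2 (volume.restrict (cylDomain ω)) →
      Tendsto (fun ε : ℝ => ∫ x in cylDomain ω, ⟪u ε x, φ x⟫) (𝓝[>] (0 : ℝ))
        (𝓝 (∫ x in cylDomain ω,
          ⟪(1 - π / 16) • u₁ x + (π / 16) • u₂ x, φ x⟫)) := by
  intro φ hφ
  set c : ℝ := π / 16 with hc
  have hΩm : MeasurableSet (cylDomain ω) := (TwoScaleAux.isOpen_cylDomain hω).measurableSet
  have hEm : ∀ ε : ℝ, MeasurableSet (Etwo ω ε) :=
    fun ε => (TwoScaleAux.isOpen_Etwo ω ε).measurableSet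
  have hEsub : ∀ ε : ℝ, Etwo ω ε ⊆ cylDomain ω := fun ε => TwoScaleAux.Etwo_subset ω ε
  have hEonem : ∀ ε : ℝ, MeasurableSet (Eone ω ε) := fun ε => hΩm.diff (hEm ε)
  have hEonesub : ∀ ε : ℝ, Eone ω ε ⊆ cylDomain ω := fun ε => Set.diff_subset
  have hI1 : Integrable (fun x => ⟪u₁ x, φ x⟫) (volume.restrict (cylDomain ω)) :=
    TwoScaleAux.integrable_inner_of_memL2 hu₁ hφ
  have hI2 : Integrable (fun x => ⟪u₂ x, φ x⟫) (volume.restrict (cylDomain ω)) :=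
    TwoScaleAux.integrable_inner_of_memL2 hu₂ hφ
  have hφ2 : Integrable (fun x => ‖φ x‖ ^ 2) (volume.restrict (cylDomain ω)) :=
    (MeasureTheory.memLp_two_iff_integrable_sq_norm hφ.1).mp hφ
  set I₁ := ∫ x in cylDomain ω, ⟪u₁ x, φ x⟫ with hI₁def
  set I₂ := ∫ x in cylDomain ω, ⟪u₂ x, φ x⟫ with hI₂def
  have htarget : (∫ x in cylDomain ω, ⟪(1 - c) • u₁ x + c • u₂ x, φ x⟫)
      = (1 - c) * I₁ + c * I₂ := by
    have heq : ∀ x, ⟪(1 - c) • u₁ x + c • u₂ x, φ x⟫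
        = (1 - c) * ⟪u₁ x, φ x⟫ + c * ⟪u₂ x, φ x⟫ := by
      intro x
      rw [inner_add_left, real_inner_smul_left, real_inner_smul_left]
    calc (∫ x in cylDomain ω, ⟪(1 - c) • u₁ x + c • u₂ x, φ x⟫)
        = ∫ x in cylDomain ω, ((1 - c) * ⟪u₁ x, φ x⟫ + c * ⟪u₂ x, φ x⟫) :=
          integral_congr_ae (Filter.Eventually.of_forall fun x => heq x)
      _ = (1 - c) * I₁ + c * I₂ := by
          rw [integral_add (hI1.const_mul _) (hI2.const_mul _), integral_const_mul,
            integral_const_mul]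
  rw [htarget]
  have hdecomp : ∀ ε : ℝ, 0 < ε →
      (∫ x in cylDomain ω, ⟪u ε x, φ x⟫)
        = (∫ x in Eone ω ε, ⟪u ε x - u₁ x, φ x⟫)
          + (∫ x in Etwo ω ε, ⟪u ε x - u₂ x, φ x⟫)
          + (I₁ - ∫ x in Etwo ω ε, ⟪u₁ x, φ x⟫)
          + ∫ x in Etwo ω ε, ⟪u₂ x, φ x⟫ := by
    intro ε hε
    have hML := huL2 ε hε
    have hIε : IntegrableOn (fun x => ⟪u ε x, φ x⟫) (cylDomain ω) volume :=
      TwoScaleAux.integrable_inner_of_memL2 hML hφ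
    have hIε1 : IntegrableOn (fun x => ⟪u ε x - u₁ x, φ x⟫) (cylDomain ω) volume :=
      TwoScaleAux.integrable_inner_of_memL2 (hML.sub hu₁) hφ
    have hIε2 : IntegrableOn (fun x => ⟪u ε x - u₂ x, φ x⟫) (cylDomain ω) volume :=
      TwoScaleAux.integrable_inner_of_memL2 (hML.sub hu₂) hφ
    have hI1' : IntegrableOn (fun x => ⟪u₁ x, φ x⟫) (cylDomain ω) volume := hI1
    have hI2' : IntegrableOn (fun x => ⟪u₂ x, φ x⟫) (cylDomain ω) volume := hI2
    have e0 : ∫ x in Eone ω ε, ⟪u ε x, φ x⟫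
        = (∫ x in cylDomain ω, ⟪u ε x, φ x⟫) - ∫ x in Etwo ω ε, ⟪u ε x, φ x⟫ :=
      integral_diff (hEm ε) hIε (hEsub ε)
    have e1 : ∫ x in Eone ω ε, ⟪u ε x, φ x⟫
        = (∫ x in Eone ω ε, ⟪u ε x - u₁ x, φ x⟫) + ∫ x in Eone ω ε, ⟪u₁ x, φ x⟫ := by
      rw [← integral_add (hIε1.mono_set (hEonesub ε)) (hI1'.mono_set (hEonesub ε))]
      apply setIntegral_congr_fun (hEonem ε)
      intro x _
      simp only [inner_sub_left]
      ring
    have e2 : ∫ x in Etwo ω ε, ⟪u ε x, φ x⟫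
        = (∫ x in Etwo ω ε, ⟪u ε x - u₂ x, φ x⟫) + ∫ x in Etwo ω ε, ⟪u₂ x, φ x⟫ := by
      rw [← integral_add (hIε2.mono_set (hEsub ε)) (hI2'.mono_set (hEsub ε))]
      apply setIntegral_congr_fun (hEm ε)
      intro x _
      simp only [inner_sub_left]
      ring
    have e3 : ∫ x in Eone ω ε, ⟪u₁ x, φ x⟫ = I₁ - ∫ x in Etwo ω ε, ⟪u₁ x, φ x⟫ :=
      integral_diff (hEm ε) hI1' (hEsub ε)
    rw [e1, e3] at e0
    rw [e2] at e0
    linarith [e0]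
  have hkey1 := TwoScaleAux.key_tendsto hω hωb hI1
  have hkey2 := TwoScaleAux.key_tendsto hω hωb hI2
  set B := Real.sqrt (∫ x in cylDomain ω, ‖φ x‖ ^ 2) with hBdef
  have sqrt_tendsto : ∀ {F : ℝ → ℝ}, Filter.Tendsto F (𝓝[>] (0:ℝ)) (𝓝 0) →
      Filter.Tendsto (fun ε => Real.sqrt (F ε) * B) (𝓝[>] (0:ℝ)) (𝓝 0) := by
    intro F hF
    have h0 : Filter.Tendsto (fun ε => Real.sqrt (F ε)) (𝓝[>] (0:ℝ)) (𝓝 (Real.sqrt 0)) :=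
      (Real.continuous_sqrt.continuousAt).tendsto.comp hF
    rw [Real.sqrt_zero] at h0
    simpa using h0.mul_const B
  have hT1 : Filter.Tendsto (fun ε => ∫ x in Eone ω ε, ⟪u ε x - u₁ x, φ x⟫)
      (𝓝[>] (0:ℝ)) (𝓝 0) := by
    apply squeeze_zero_norm' ?_ (sqrt_tendsto hconv1)
    filter_upwards [self_mem_nhdsWithin] with ε hε
    have hML := huL2 ε hε
    have hle : volume.restrict (Eone ω ε) ≤ volume.restrict (cylDomain ω) :=
      Measure.restrict_mono (hEonesub ε) le_rfl
    have h1 := TwoScaleAux.abs_integral_inner_le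
      ((hML.sub hu₁).mono_measure hle) (hφ.mono_measure hle)
    rw [Real.norm_eq_abs]
    refine h1.trans ?_
    apply mul_le_mul_of_nonneg_left ?_ (Real.sqrt_nonneg _)
    apply Real.sqrt_le_sqrt
    exact setIntegral_mono_set hφ2
      (Filter.Eventually.of_forall fun x => sq_nonneg _)
      ((hEonesub ε).eventuallyLE)
  have hT2 : Filter.Tendsto (fun ε => ∫ x in Etwo ω ε, ⟪u ε x - u₂ x, φ x⟫)
      (𝓝[>] (0:ℝ)) (𝓝 0) := by
    apply squeeze_zero_norm' ?_ (sqrt_tendsto hconv2)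
    filter_upwards [self_mem_nhdsWithin] with ε hε
    have hML := huL2 ε hε
    have hle : volume.restrict (Etwo ω ε) ≤ volume.restrict (cylDomain ω) :=
      Measure.restrict_mono (hEsub ε) le_rfl
    have h1 := TwoScaleAux.abs_integral_inner_le
      ((hML.sub hu₂).mono_measure hle) (hφ.mono_measure hle)
    rw [Real.norm_eq_abs]
    refine h1.trans ?_
    apply mul_le_mul_of_nonneg_left ?_ (Real.sqrt_nonneg _)
    apply Real.sqrt_le_sqrt
    exact setIntegral_mono_set hφ2
      (Filter.Eventually.of_forall fun x => sq_nonneg _)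
      ((hEsub ε).eventuallyLE)
  have hsum := ((hT1.add hT2).add ((tendsto_const_nhds (x := I₁)).sub hkey1)).add hkey2
  have hval : ((0:ℝ) + 0 + (I₁ - c * I₁)) + c * I₂ = (1 - c) * I₁ + c * I₂ := by ring
  rw [hval] at hsum
  refine Filter.Tendsto.congr' ?_ hsum
  filter_upwards [self_mem_nhdsWithin] with ε hε
  exact (hdecomp ε hε).symm
end

section
/- Let (u_ε)_{ε>0} be maps Ω → ℝ³ such that for each ε there are c_ε, d_ε ∈ ℝ³ with u_ε(x) = c_ε×x + d_ε for all x ∈ εE¹, and suppose ∫_{εE¹} |u_ε − u₁|² dx → 0 as ε→0 for some u₁ ∈ L²(Ω;ℝ³). Then u₁ is a rigid displacement: there exist c, d ∈ ℝ³ such that u₁(x) = c×x + d for a.e. x ∈ Ω. -/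
open MeasureTheory Real Filter Topology

section RigidAux

open Set Metric Bornology

local notation "E2" => EuclideanSpace ℝ (Fin 2)
local notation "E3" => EuclideanSpace ℝ (Fin 3)

lemma cross3_apply0 (a b : E3) : cross3 a b 0 = a 1 * b 2 - a 2 * b 1 := rfl
lemma cross3_apply1 (a b : E3) : cross3 a b 1 = a 2 * b 0 - a 0 * b 2 := rfl
lemma cross3_apply2 (a b : E3) : cross3 a b 2 = a 0 * b 1 - a 1 * b 0 := rfl

lemma proj2_apply0 (x : E3) : proj2 x 0 = x 0 := rfl
lemma proj2_apply1 (x : E3) : proj2 x 1 = x 1 := rfl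

lemma e3_ext {x y : E3} (h0 : x 0 = y 0) (h1 : x 1 = y 1) (h2 : x 2 = y 2) : x = y := by
  rw [WithLp.ext_iff]
  funext i
  match i with
  | ⟨0, _⟩ => exact h0
  | ⟨1, _⟩ => exact h1
  | ⟨2, _⟩ => exact h2

lemma e2_ext {x y : E2} (h0 : x 0 = y 0) (h1 : x 1 = y 1) : x = y := by
  rw [WithLp.ext_iff]
  funext i
  match i with
  | ⟨0, _⟩ => exact h0
  | ⟨1, _⟩ => exact h1

lemma norm_sq_e3 (x : E3) : ‖x‖ ^ 2 = x 0 ^ 2 + x 1 ^ 2 + x 2 ^ 2 := by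
  rw [EuclideanSpace.norm_eq, sq_sqrt (by positivity)]
  simp [Fin.sum_univ_three, sq_abs]

lemma norm_sq_e2 (x : E2) : ‖x‖ ^ 2 = x 0 ^ 2 + x 1 ^ 2 := by
  rw [EuclideanSpace.norm_eq, sq_sqrt (by positivity)]
  simp [Fin.sum_univ_two, sq_abs]

/-- The rigid displacement associated to coefficients `v = (α, β)`. -/
def rig (v : E3 × E3) (x : E3) : E3 := cross3 v.1 x + v.2

lemma rig_sub (v w : E3 × E3) (x : E3) : rig v x - rig w x = rig (v - w) x := by
  apply e3_ext <;>
    simp [rig, cross3_apply0, cross3_apply1, cross3_apply2, PiLp.sub_apply, PiLp.add_apply] <;>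
    ring

lemma rig_smul (t : ℝ) (v : E3 × E3) (x : E3) : rig (t • v) x = t • rig v x := by
  apply e3_ext <;>
    simp [rig, cross3_apply0, cross3_apply1, cross3_apply2, PiLp.smul_apply, PiLp.add_apply,
      smul_eq_mul] <;>
    ring

lemma sqnorm_add_le {G : Type*} [SeminormedAddGroup G] (p q : G) :
    ‖p + q‖ ^ 2 ≤ 2 * ‖p‖ ^ 2 + 2 * ‖q‖ ^ 2 := by
  have h := norm_add_le p q
  have h2 : ‖p + q‖ ^ 2 ≤ (‖p‖ + ‖q‖) ^ 2 :=
    pow_le_pow_left₀ (norm_nonneg _) h 2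
  nlinarith [sq_nonneg (‖p‖ - ‖q‖)]

lemma cross3_norm_sq_le (a x : E3) : ‖cross3 a x‖ ^ 2 ≤ 2 * ‖a‖ ^ 2 * ‖x‖ ^ 2 := by
  rw [norm_sq_e3, norm_sq_e3, norm_sq_e3, cross3_apply0, cross3_apply1, cross3_apply2]
  nlinarith [sq_nonneg (a 1 * x 2 + a 2 * x 1), sq_nonneg (a 2 * x 0 + a 0 * x 2),
    sq_nonneg (a 0 * x 1 + a 1 * x 0), sq_nonneg (a 0 * x 0), sq_nonneg (a 1 * x 1),
    sq_nonneg (a 2 * x 2)]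

lemma rig_norm_sq_le (Q : ℝ) (hQ : 0 ≤ Q) (v : E3 × E3) (x : E3) (hx : ‖x‖ ^ 2 ≤ Q) :
    ‖rig v x‖ ^ 2 ≤ (8 * Q + 4) * ‖v‖ ^ 2 := by
  have h1 : ‖rig v x‖ ^ 2 ≤ 2 * ‖cross3 v.1 x‖ ^ 2 + 2 * ‖v.2‖ ^ 2 := sqnorm_add_le _ _
  have h2 := cross3_norm_sq_le v.1 x
  have h3 : ‖v.1‖ ≤ ‖v‖ := norm_fst_le v
  have h4 : ‖v.2‖ ≤ ‖v‖ := norm_snd_le v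
  have h5 : ‖v.1‖ ^ 2 ≤ ‖v‖ ^ 2 := by nlinarith [norm_nonneg v.1, norm_nonneg v]
  have h6 : ‖v.2‖ ^ 2 ≤ ‖v‖ ^ 2 := by nlinarith [norm_nonneg v.2, norm_nonneg v]
  nlinarith [norm_nonneg v, sq_nonneg ‖v‖, norm_nonneg v.1, sq_nonneg (‖v.1‖), norm_nonneg x,
    sq_nonneg ‖x‖, mul_nonneg (mul_nonneg (by norm_num : (0:ℝ) ≤ 2) (sq_nonneg ‖v.1‖)) (sq_nonneg ‖x‖)]

lemma continuous_rig (v : E3 × E3) : Continuous (rig v) := by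
  have : Continuous fun x : E3 => (cross3 v.1 x : E3) := by
    apply (PiLp.continuous_toLp 2 _).comp
    apply continuous_pi
    intro i
    match i with
    | ⟨0, _⟩ => exact Continuous.sub (continuous_const.mul (PiLp.continuous_apply 2 (fun _ : Fin 3 => ℝ) (2 : Fin 3))) (continuous_const.mul (PiLp.continuous_apply 2 (fun _ : Fin 3 => ℝ) (1 : Fin 3)))
    | ⟨1, _⟩ => exact Continuous.sub (continuous_const.mul (PiLp.continuous_apply 2 (fun _ : Fin 3 => ℝ) (0 : Fin 3))) (continuous_const.mul (PiLp.continuous_apply 2 (fun _ : Fin 3 => ℝ) (2 : Fin 3)))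
    | ⟨2, _⟩ => exact Continuous.sub (continuous_const.mul (PiLp.continuous_apply 2 (fun _ : Fin 3 => ℝ) (1 : Fin 3))) (continuous_const.mul (PiLp.continuous_apply 2 (fun _ : Fin 3 => ℝ) (0 : Fin 3)))
  exact this.add continuous_const

end RigidAux
section GeomAux

open Set Metric Bornology MeasureTheory
open scoped ENNReal NNReal

local notation "E2" => EuclideanSpace ℝ (Fin 2)
local notation "E3" => EuclideanSpace ℝ (Fin 3)

/-- open box around `c` of half-width `r` in the plane. -/
def box2 (cc : E2) (r : ℝ) : Set E2 := {y | ∀ j, |y j - cc j| < r}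

lemma box2_eq_preimage (cc : E2) (r : ℝ) :
    box2 cc r = (MeasurableEquiv.toLp 2 (Fin 2 → ℝ)).symm ⁻¹'
      (Set.univ.pi fun j => Ioo (cc j - r) (cc j + r)) := by
  ext y
  simp only [box2, mem_setOf_eq, mem_preimage, Set.mem_pi, mem_univ, forall_true_left, mem_Ioo]
  have hco : ∀ j, (MeasurableEquiv.toLp 2 (Fin 2 → ℝ)).symm y j = y j := fun j => rfl
  constructor
  · intro h j
    rw [hco]
    have := abs_lt.mp (h j)
    exact ⟨by linarith [this.1], by linarith [this.2]⟩
  · intro h j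
    rw [abs_lt]
    have := h j
    rw [hco] at this
    exact ⟨by linarith [this.1], by linarith [this.2]⟩

lemma volume_box2 (cc : E2) (r : ℝ) :
    volume (box2 cc r) = ENNReal.ofReal (2 * r) ^ 2 := by
  rw [box2_eq_preimage,
    (EuclideanSpace.volume_preserving_symm_measurableEquiv_toLp (Fin 2)).measure_preimage
      (MeasurableSet.univ_pi fun j => measurableSet_Ioo).nullMeasurableSet,
    volume_pi_pi]
  simp only [Real.volume_Ioo]
  have : ∀ x : Fin 2, ENNReal.ofReal (cc x + r - (cc x - r)) = ENNReal.ofReal (2 * r) := by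
    intro x; congr 1; ring
  rw [Finset.prod_congr rfl (fun x _ => this x), Finset.prod_const, Finset.card_univ,
    Fintype.card_fin]
lemma abs_coord_le_dist (y cc : E2) (j : Fin 2) : |y j - cc j| ≤ dist y cc := by
  rw [EuclideanSpace.dist_eq]
  have h1 : |y j - cc j| = Real.sqrt (dist (y j) (cc j) ^ 2) := by
    rw [Real.sqrt_sq_eq_abs, Real.dist_eq, abs_abs]
  rw [h1]
  apply Real.sqrt_le_sqrt
  exact Finset.single_le_sum (fun i _ => sq_nonneg (dist (y i) (cc i))) (Finset.mem_univ j)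

lemma ball_subset_box2 (cc : E2) (r : ℝ) : Metric.ball cc r ⊆ box2 cc r := by
  intro y hy j
  exact lt_of_le_of_lt (abs_coord_le_dist y cc j) (mem_ball.mp hy)

lemma volume_ball_le (cc : E2) (r : ℝ) :
    volume (Metric.ball cc r) ≤ ENNReal.ofReal (2 * r) ^ 2 :=
  le_trans (measure_mono (ball_subset_box2 cc r)) (volume_box2 cc r).le

/-- the grid cell of index `i` (open square of side `ε` centered at `ctr ε i`). -/
def gcell (ε : ℝ) (i : ℤ × ℤ) : Set E2 := box2 (ctr ε i) (ε / 2)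

lemma volume_gcell (ε : ℝ) (hε : 0 < ε) (i : ℤ × ℤ) :
    volume (gcell ε i) = ENNReal.ofReal (ε ^ 2) := by
  rw [gcell, volume_box2]
  rw [← ENNReal.ofReal_pow (by linarith)]
  congr 1
  ring

lemma measurableSet_box2 (cc : E2) (r : ℝ) : MeasurableSet (box2 cc r) := by
  rw [box2_eq_preimage]
  exact (MeasurableEquiv.toLp 2 (Fin 2 → ℝ)).symm.measurable
    (MeasurableSet.univ_pi fun j => measurableSet_Ioo)

lemma ctr_apply0 (ε : ℝ) (i : ℤ × ℤ) : ctr ε i 0 = ε * i.1 + ε / 2 := rfl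
lemma ctr_apply1 (ε : ℝ) (i : ℤ × ℤ) : ctr ε i 1 = ε * i.2 + ε / 2 := rfl

lemma gcell_disjoint (ε : ℝ) (hε : 0 < ε) {i j : ℤ × ℤ} (hij : i ≠ j) :
    Disjoint (gcell ε i) (gcell ε j) := by
  rw [Set.disjoint_left]
  intro y hyi hyj
  have key : ∀ (a b : ℤ), a ≠ b → ∀ (t : ℝ), |t - (ε * a + ε / 2)| < ε / 2 →
      |t - (ε * b + ε / 2)| < ε / 2 → False := by
    intro a b hab t h1 h2
    have hz : (1 : ℤ) ≤ |a - b| := Int.one_le_abs (sub_ne_zero.mpr hab)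
    have habs : (1 : ℝ) ≤ |(a : ℝ) - (b : ℝ)| := by
      have h' := (@Int.cast_le ℝ _ _ _).mpr hz
      push_cast at h'
      simpa using h'
    have h3 : |ε * a - ε * b| < ε := by
      calc |ε * a - ε * b| = |(t - (ε * b + ε / 2)) - (t - (ε * a + ε / 2))| := by ring_nf
        _ ≤ |t - (ε * b + ε / 2)| + |t - (ε * a + ε / 2)| := abs_sub _ _
        _ < ε / 2 + ε / 2 := add_lt_add h2 h1
        _ = ε := by ring
    have h4 : ε ≤ |ε * a - ε * b| := by
      rw [← mul_sub, abs_mul, abs_of_pos hε]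
      calc ε = ε * 1 := (mul_one ε).symm
        _ ≤ ε * |(a : ℝ) - (b : ℝ)| := mul_le_mul_of_nonneg_left habs hε.le
    linarith
  have hcase : i.1 ≠ j.1 ∨ i.2 ≠ j.2 := by
    by_contra h
    push_neg at h
    exact hij (Prod.ext h.1 h.2)
  rcases hcase with h | h
  · have h1 := hyi 0
    have h2 := hyj 0
    rw [ctr_apply0] at h1 h2
    exact (key i.1 j.1 h (y 0) h1 h2).elim
  · have h1 := hyi 1
    have h2 := hyj 1
    rw [ctr_apply1] at h1 h2
    exact (key i.2 j.2 h (y 1) h1 h2).elim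

/-- The planar disk pattern at scale `ε`. -/
def Pat (ω : Set E2) (ε : ℝ) : Set E2 := ⋃ i ∈ idx ω ε, Metric.ball (ctr ε i) (ε / 4)

lemma mem_Etwo_iff {ω : Set E2} {ε : ℝ} {x : E3} :
    x ∈ Etwo ω ε ↔ proj2 x ∈ Pat ω ε ∧ x 2 ∈ Set.Ioo (0 : ℝ) 1 := by
  simp only [Etwo, Pat, Set.mem_iUnion, cylE, Set.mem_setOf_eq]
  constructor
  · rintro ⟨i, hi, hb, hz⟩
    exact ⟨⟨i, hi, hb⟩, hz⟩
  · rintro ⟨⟨i, hi, hb⟩, hz⟩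
    exact ⟨i, hi, hb, hz⟩

lemma proj2_embed (y : E2) (t : ℝ) : proj2 (WithLp.toLp 2 ![y 0, y 1, t] : E3) = y := by
  apply e2_ext <;> rfl

lemma Pat_subset (ω : Set E2) (ε : ℝ) : Pat ω ε ⊆ ω := by
  rintro y hy
  simp only [Pat, Set.mem_iUnion] at hy
  obtain ⟨i, hi, hb⟩ := hy
  have hx : (WithLp.toLp 2 ![y 0, y 1, 1/2] : E3) ∈ cylE ε i := by
    refine ⟨?_, by exact show (1/2:ℝ) ∈ Set.Ioo (0:ℝ) 1 by norm_num⟩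
    rw [proj2_embed]
    exact hb
  have := hi hx
  rw [cylDomain, Set.mem_setOf_eq, proj2_embed] at this
  exact this.1

lemma continuous_proj2 : Continuous proj2 := by
  apply (PiLp.continuous_toLp 2 _).comp
  apply continuous_pi
  intro j
  match j with
  | ⟨0, _⟩ => exact PiLp.continuous_apply 2 (fun _ : Fin 3 => ℝ) (0 : Fin 3)
  | ⟨1, _⟩ => exact PiLp.continuous_apply 2 (fun _ : Fin 3 => ℝ) (1 : Fin 3)

lemma continuous_coord2 : Continuous fun x : E3 => x 2 := PiLp.continuous_apply 2 (fun _ : Fin 3 => ℝ) _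

lemma isOpen_cylE (ε : ℝ) (i : ℤ × ℤ) : IsOpen (cylE ε i) := by
  have : cylE ε i = proj2 ⁻¹' (Metric.ball (ctr ε i) (ε / 4)) ∩
      (fun x : E3 => x 2) ⁻¹' Set.Ioo 0 1 := rfl
  rw [this]
  exact (Metric.isOpen_ball.preimage continuous_proj2).inter
    (isOpen_Ioo.preimage continuous_coord2)

lemma isOpen_cylDomain {ω : Set E2} (hω : IsOpen ω) : IsOpen (cylDomain ω) := by
  have : cylDomain ω = proj2 ⁻¹' ω ∩ (fun x : E3 => x 2) ⁻¹' Set.Ioo 0 1 := rfl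
  rw [this]
  exact (hω.preimage continuous_proj2).inter (isOpen_Ioo.preimage continuous_coord2)

lemma isOpen_Etwo (ω : Set E2) (ε : ℝ) : IsOpen (Etwo ω ε) :=
  isOpen_biUnion fun i _ => isOpen_cylE ε i

lemma measurableSet_Eone (ω : Set E2) (hω : IsOpen ω) (ε : ℝ) : MeasurableSet (Eone ω ε) :=
  ((isOpen_cylDomain hω).measurableSet).diff (isOpen_Etwo ω ε).measurableSet
/-- Index set of the cells at scale `ε` whose enlarged disk meets `B`. -/
def Jset (ω : Set E2) (ε : ℝ) (B : Set E2) : Set (ℤ × ℤ) :=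
  {i : ℤ × ℤ | i ∈ idx ω ε ∧ (Metric.ball (ctr ε i) (5 * ε / 12) ∩ B).Nonempty}

lemma count_subset (ω : Set E2) {ε : ℝ} (hε : 0 < ε) (B : Set E2) :
    closure (Metric.thickening (ε / 12) (Pat ω ε)) ∩ B ⊆
      ⋃ i ∈ Jset ω ε B, Metric.ball (ctr ε i) (5 * ε / 12) := by
  rintro y ⟨hy1, hy2⟩
  have h1 : y ∈ Metric.thickening (ε / 6) (Pat ω ε) :=
    Metric.cthickening_subset_thickening' (by linarith) (by linarith) _
      ((Metric.closure_thickening_subset_cthickening _ _) hy1)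
  rw [Metric.mem_thickening_iff] at h1
  obtain ⟨z, hz, hdz⟩ := h1
  simp only [Pat, Set.mem_iUnion] at hz
  obtain ⟨i, hi, hb⟩ := hz
  have hyi : y ∈ Metric.ball (ctr ε i) (5 * ε / 12) := by
    rw [Metric.mem_ball] at hb ⊢
    calc dist y (ctr ε i) ≤ dist y z + dist z (ctr ε i) := dist_triangle _ _ _
      _ < ε / 6 + ε / 4 := add_lt_add hdz hb
      _ = 5 * ε / 12 := by ring
  exact Set.mem_biUnion ⟨hi, ⟨y, hyi, hy2⟩⟩ hyi

lemma dist_le_coords (y cc : E2) : dist y cc ≤ |y 0 - cc 0| + |y 1 - cc 1| := by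
  rw [EuclideanSpace.dist_eq, Fin.sum_univ_two]
  have h0 : dist (y 0) (cc 0) = |y 0 - cc 0| := rfl
  have h1 : dist (y 1) (cc 1) = |y 1 - cc 1| := rfl
  rw [h0, h1]
  have habs : Real.sqrt ((|y 0 - cc 0| + |y 1 - cc 1|) ^ 2) = |y 0 - cc 0| + |y 1 - cc 1| :=
    Real.sqrt_sq (by positivity)
  rw [← habs]
  apply Real.sqrt_le_sqrt
  nlinarith [abs_nonneg (y 0 - cc 0), abs_nonneg (y 1 - cc 1), sq_abs (y 0 - cc 0),
    sq_abs (y 1 - cc 1)]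

lemma count_sum (ω : Set E2) {ε : ℝ} (hε : 0 < ε) (B : Set E2) :
    ∑' _i : Jset ω ε B, ENNReal.ofReal (ε ^ 2) ≤
      volume (Metric.thickening (2 * ε) B) := by
  have hdisj : (Jset ω ε B).PairwiseDisjoint (gcell ε) :=
    fun i _ j _ hij => gcell_disjoint ε hε hij
  have hsum : ∑' i : Jset ω ε B, ENNReal.ofReal (ε ^ 2)
      = volume (⋃ i ∈ Jset ω ε B, gcell ε i) := by
    rw [measure_biUnion (Set.to_countable _) hdisj (fun b _ => measurableSet_box2 _ _)]
    exact tsum_congr fun i => (volume_gcell ε hε i).symm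
  rw [hsum]
  apply measure_mono
  rintro y hy
  simp only [Set.mem_iUnion] at hy
  obtain ⟨i, hiJ, hyc⟩ := hy
  obtain ⟨b, hb1, hb2⟩ := hiJ.2
  rw [Metric.mem_thickening_iff]
  refine ⟨b, hb2, ?_⟩
  have hdyc : dist y (ctr ε i) ≤ |y 0 - ctr ε i 0| + |y 1 - ctr ε i 1| := dist_le_coords _ _
  have h0 := hyc 0
  have h1 := hyc 1
  calc dist y b ≤ dist y (ctr ε i) + dist (ctr ε i) b := dist_triangle _ _ _
    _ < (ε / 2 + ε / 2) + 5 * ε / 12 := by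
        apply add_lt_add_of_le_of_lt
        · exact le_trans hdyc (by linarith)
        · rw [dist_comm]; exact Metric.mem_ball.mp hb1
    _ ≤ 2 * ε := by linarith

lemma vol_smallball_le (cc : E2) {ε : ℝ} (hε : 0 < ε) :
    volume (Metric.ball cc (5 * ε / 12)) ≤ ENNReal.ofReal (3 / 4) * ENNReal.ofReal (ε ^ 2) := by
  refine le_trans (volume_ball_le cc _) ?_
  rw [← ENNReal.ofReal_pow (by linarith), ← ENNReal.ofReal_mul (by norm_num)]
  apply ENNReal.ofReal_le_ofReal
  nlinarith

lemma volume_cylball_le (cc : E2) {r : ℝ} (hr : 0 ≤ r) :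
    volume {x : E3 | proj2 x ∈ Metric.ball cc r ∧ x 2 ∈ Set.Ioo (0 : ℝ) 1} ≤
      ENNReal.ofReal (2 * r) ^ 2 := by
  set S' : Fin 3 → Set ℝ := ![Set.Ioo (cc 0 - r) (cc 0 + r), Set.Ioo (cc 1 - r) (cc 1 + r),
    Set.Ioo 0 1] with hS'
  have hsub : {x : E3 | proj2 x ∈ Metric.ball cc r ∧ x 2 ∈ Set.Ioo (0 : ℝ) 1} ⊆
      (MeasurableEquiv.toLp 2 (Fin 3 → ℝ)).symm ⁻¹' (Set.univ.pi S') := by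
    rintro x ⟨hx1, hx2⟩
    intro j _
    have hd0 : |proj2 x 0 - cc 0| ≤ dist (proj2 x) cc := abs_coord_le_dist _ _ _
    have hd1 : |proj2 x 1 - cc 1| ≤ dist (proj2 x) cc := abs_coord_le_dist _ _ _
    have hlt := Metric.mem_ball.mp hx1
    rw [proj2_apply0] at hd0
    rw [proj2_apply1] at hd1
    match j with
    | ⟨0, _⟩ =>
      have h := abs_lt.mp (lt_of_le_of_lt hd0 hlt)
      exact show x 0 ∈ Set.Ioo (cc 0 - r) (cc 0 + r) from
        ⟨by linarith [h.1], by linarith [h.2]⟩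
    | ⟨1, _⟩ =>
      have h := abs_lt.mp (lt_of_le_of_lt hd1 hlt)
      exact show x 1 ∈ Set.Ioo (cc 1 - r) (cc 1 + r) from
        ⟨by linarith [h.1], by linarith [h.2]⟩
    | ⟨2, _⟩ => exact hx2
  refine le_trans (measure_mono hsub) ?_
  rw [(EuclideanSpace.volume_preserving_symm_measurableEquiv_toLp (Fin 3)).measure_preimage ?hm,
    volume_pi_pi]
  case hm =>
    refine (MeasurableSet.univ_pi fun j => ?_).nullMeasurableSet
    match j with
    | ⟨0, _⟩ => exact measurableSet_Ioo
    | ⟨1, _⟩ => exact measurableSet_Ioo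
    | ⟨2, _⟩ => exact measurableSet_Ioo
  rw [Fin.prod_univ_three]
  have e0 : S' 0 = Set.Ioo (cc 0 - r) (cc 0 + r) := rfl
  have e1 : S' 1 = Set.Ioo (cc 1 - r) (cc 1 + r) := rfl
  have e2 : S' 2 = Set.Ioo (0 : ℝ) 1 := rfl
  rw [e0, e1, e2, Real.volume_Ioo, Real.volume_Ioo, Real.volume_Ioo]
  have : ∀ t : ℝ, t + r - (t - r) = 2 * r := fun t => by ring
  rw [this, this]
  norm_num [pow_two]
lemma box34 {ε : ℝ} (hε : 0 < ε) :
    ENNReal.ofReal (2 * (5 * ε / 12)) ^ 2 ≤ ENNReal.ofReal (3 / 4) * ENNReal.ofReal (ε ^ 2) := by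
  rw [← ENNReal.ofReal_pow (by linarith), ← ENNReal.ofReal_mul (by norm_num)]
  apply ENNReal.ofReal_le_ofReal
  nlinarith

lemma tsum_half_pow : ∑' n : ℕ, (ENNReal.ofReal ((1 : ℝ) / 2)) ^ (n + 1) = 1 := by
  have hr : ENNReal.ofReal ((1 : ℝ) / 2) = 2⁻¹ := by
    rw [show (1 / 2 : ℝ) = (2 : ℝ)⁻¹ by norm_num, ENNReal.ofReal_inv_of_pos (by norm_num)]
    norm_num
  rw [hr]
  have : ∀ n : ℕ, ((2 : ℝ≥0∞)⁻¹) ^ (n + 1) = 2⁻¹ * (2⁻¹) ^ n := fun n => pow_succ' _ _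
  rw [tsum_congr this, ENNReal.tsum_mul_left, ENNReal.tsum_geometric, ENNReal.one_sub_inv_two,
    inv_inv, ENNReal.inv_mul_cancel (by norm_num) (by norm_num)]

/-- **Covering lemma**: if `g ≥ 0` is integrable on `Ω` and its integral over `Eone ω e`
can be made arbitrarily small for arbitrarily small `e`, then its integral over `Ω`
is nonpositive. -/
lemma integral_le_of_small_on_Eone
    (ω : Set E2) (hω : IsOpen ω) (hωb : Bornology.IsBounded ω)
    (g : E3 → ℝ) (hg : ∀ x, 0 ≤ g x)
    (hgi : IntegrableOn g (cylDomain ω) volume)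
    (H : ∀ θ : ℝ, 0 < θ → ∀ δ : ℝ, 0 < δ → ∃ e : ℝ, 0 < e ∧ e < δ ∧
        (∫ x in Eone ω e, g x) ≤ θ) :
    (∫ x in cylDomain ω, g x) ≤ 0 := by
  by_contra hpos
  push_neg at hpos
  -- it suffices to show the integral is at most `cc` for `cc := I/2`
  set I := ∫ x in cylDomain ω, g x with hI
  set cc := I / 2 with hcc
  have hccpos : 0 < cc := by positivity
  suffices hle : I ≤ cc by rw [hcc] at hle; linarith
  -- setup
  obtain ⟨R₁, hR₁⟩ := hωb.subset_closedBall 0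
  set C0 : Set E2 := Metric.closedBall 0 (|R₁| + 1) with hC0
  -- one step of the construction
  have step : ∀ n : ℕ, ∀ C : Set E2, IsClosed C → Bornology.IsBounded C →
      ∃ e : ℝ, 0 < e ∧ (∫ x in Eone ω e, g x) ≤ cc * (1 / 2) ^ (n + 1) ∧
        e < (1 / 2) ^ (n + 1) ∧
        volume (Metric.thickening (2 * e) C) ≤ volume C + ENNReal.ofReal ((1 / 2) ^ (n + 1)) := by
    intro n C hCc hCb
    have hCfin : volume (Metric.thickening 1 C) ≠ ⊤ := (hCb.thickening).measure_lt_top.ne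
    have htend := tendsto_measure_thickening_of_isClosed ⟨1, one_pos, hCfin⟩ hCc
    have hfinC : volume C ≠ ⊤ := hCb.measure_lt_top.ne
    have hlt : volume C < volume C + ENNReal.ofReal ((1 / 2) ^ (n + 1)) :=
      ENNReal.lt_add_right hfinC (ENNReal.ofReal_pos.mpr (by positivity)).ne'
    have hev := htend.eventually_lt_const hlt
    obtain ⟨uu, huu, hsub⟩ := mem_nhdsGT_iff_exists_Ioo_subset.mp hev
    have huupos : 0 < uu := huu
    obtain ⟨e, he1, he2, he3⟩ := H (cc * (1 / 2) ^ (n + 1)) (by positivity)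
      (min (uu / 2) ((1 / 2) ^ (n + 1))) (lt_min (by positivity) (by positivity))
    refine ⟨e, he1, he3, lt_of_lt_of_le he2 (min_le_right _ _), ?_⟩
    have h2e : 2 * e ∈ Set.Ioo (0 : ℝ) uu := by
      constructor
      · linarith
      · have := lt_of_lt_of_le he2 (min_le_left _ _); linarith
    exact (hsub h2e).le
  have step' : ∀ (n : ℕ) (C : Set E2), ∃ e : ℝ,
      (IsClosed C ∧ Bornology.IsBounded C) →
      (0 < e ∧ (∫ x in Eone ω e, g x) ≤ cc * (1 / 2) ^ (n + 1) ∧ e < (1 / 2) ^ (n + 1) ∧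
        volume (Metric.thickening (2 * e) C) ≤ volume C + ENNReal.ofReal ((1 / 2) ^ (n + 1))) := by
    intro n C
    by_cases h : IsClosed C ∧ Bornology.IsBounded C
    · obtain ⟨e, h1, h2, h3, h4⟩ := step n C h.1 h.2
      exact ⟨e, fun _ => ⟨h1, h2, h3, h4⟩⟩
    · exact ⟨1, fun h' => absurd h' h⟩
  choose ef hef using step'
  -- the recursively-defined closed sets
  set Cs : ℕ → Set E2 := fun n => Nat.rec C0
    (fun m C => closure (Metric.thickening (ef m C / 12) (Pat ω (ef m C))) ∩ C) n with hCsdef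
  set es : ℕ → ℝ := fun n => ef n (Cs n) with hesdef
  have hCs_succ : ∀ n, Cs (n + 1)
      = closure (Metric.thickening (es n / 12) (Pat ω (es n))) ∩ Cs n := fun n => rfl
  have hCb : ∀ n, IsClosed (Cs n) ∧ Bornology.IsBounded (Cs n) := by
    intro n
    induction n with
    | zero => exact ⟨Metric.isClosed_closedBall, Metric.isBounded_closedBall⟩
    | succ m ih =>
      rw [hCs_succ]
      exact ⟨isClosed_closure.inter ih.1, ih.2.subset Set.inter_subset_right⟩
  have hes := fun n => hef n (Cs n) (hCb n)
  have hCfin : ∀ n, volume (Cs n) ≠ ⊤ := fun n => (hCb n).2.measure_lt_top.ne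
  -- the ENNReal bound sequence
  set X : ℕ → ℝ≥0∞ := fun n => ENNReal.ofReal (3 / 4) *
    (volume (Cs n) + ENNReal.ofReal ((1 / 2) ^ (n + 1))) with hX
  have hXfin : ∀ n, X n ≠ ⊤ := fun n =>
    ENNReal.mul_ne_top ENNReal.ofReal_ne_top
      (ENNReal.add_ne_top.mpr ⟨hCfin n, ENNReal.ofReal_ne_top⟩)
  -- volume recursion
  have hvolrec : ∀ n, volume (Cs (n + 1)) ≤ X n := by
    intro n
    have hεpos : 0 < es n := (hes n).1
    calc volume (Cs (n + 1))
        ≤ volume (⋃ i ∈ Jset ω (es n) (Cs n), Metric.ball (ctr (es n) i) (5 * es n / 12)) := by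
          rw [hCs_succ]
          exact measure_mono (count_subset ω hεpos (Cs n))
      _ ≤ ∑' i : Jset ω (es n) (Cs n), volume (Metric.ball (ctr (es n) i) (5 * es n / 12)) :=
          measure_biUnion_le volume (Set.to_countable _) _
      _ ≤ ∑' _i : Jset ω (es n) (Cs n), ENNReal.ofReal (3 / 4) * ENNReal.ofReal ((es n) ^ 2) :=
          ENNReal.tsum_le_tsum fun i => vol_smallball_le _ hεpos
      _ = ENNReal.ofReal (3 / 4) * ∑' _i : Jset ω (es n) (Cs n), ENNReal.ofReal ((es n) ^ 2) :=
          ENNReal.tsum_mul_left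
      _ ≤ ENNReal.ofReal (3 / 4) * volume (Metric.thickening (2 * es n) (Cs n)) :=
          mul_le_mul_right (count_sum ω hεpos (Cs n)) _
      _ ≤ X n := mul_le_mul_right (hes n).2.2.2 _
  -- real-valued bounds and convergence to 0
  set b : ℕ → ℝ := fun n => (volume (Cs n)).toReal with hb
  have hbnn : ∀ n, 0 ≤ b n := fun n => ENNReal.toReal_nonneg
  have hXto : ∀ n, (X n).toReal = (3 / 4) * (b n + (1 / 2) ^ (n + 1)) := by
    intro n
    rw [hX, ENNReal.toReal_mul, ENNReal.toReal_add (hCfin n) ENNReal.ofReal_ne_top,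
      ENNReal.toReal_ofReal (by norm_num), ENNReal.toReal_ofReal (by positivity)]
  have hbrec : ∀ n, b (n + 1) ≤ (3 / 4) * (b n + (1 / 2) ^ (n + 1)) := by
    intro n
    rw [← hXto n]
    exact ENNReal.toReal_mono (hXfin n) (hvolrec n)
  have hbb : ∀ n, b n ≤ (3 / 4) ^ n * b 0 + n * (3 / 4) ^ n := by
    intro n
    induction n with
    | zero => norm_num
    | succ m ih =>
      have hhalf : ((1 : ℝ) / 2) ^ (m + 1) ≤ (3 / 4) ^ m := by
        calc ((1 : ℝ) / 2) ^ (m + 1) ≤ (1 / 2) ^ m := by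
              apply pow_le_pow_of_le_one (by norm_num) (by norm_num)
              omega
          _ ≤ (3 / 4) ^ m := pow_le_pow_left₀ (by norm_num) (by norm_num) m
      have h1 := hbrec m
      have h2 : b (m + 1) ≤ (3 / 4) * ((3 / 4) ^ m * b 0 + m * (3 / 4) ^ m + (3 / 4) ^ m) := by
        calc b (m + 1) ≤ (3 / 4) * (b m + (1 / 2) ^ (m + 1)) := h1
          _ ≤ (3 / 4) * ((3 / 4) ^ m * b 0 + m * (3 / 4) ^ m + (3 / 4) ^ m) := by
              apply mul_le_mul_of_nonneg_left _ (by norm_num)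
              linarith
      calc b (m + 1) ≤ (3 / 4) * ((3 / 4) ^ m * b 0 + m * (3 / 4) ^ m + (3 / 4) ^ m) := h2
        _ = ((m : ℝ) + 1) * (3 / 4) ^ (m + 1) + (3 / 4) ^ (m + 1) * b 0 := by ring
        _ = (3 / 4) ^ (m + 1) * b 0 + ((m + 1 : ℕ) : ℝ) * (3 / 4) ^ (m + 1) := by push_cast; ring
  have hXtend : Filter.Tendsto (fun n => (X n).toReal) Filter.atTop (nhds 0) := by
    have hupper : ∀ n : ℕ, (X n).toReal ≤
        (3 / 4) * ((3 / 4) ^ n * b 0 + n * (3 / 4) ^ n + (1 / 2) ^ (n + 1)) := by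
      intro n
      rw [hXto n]
      have := hbb n
      nlinarith [hbnn n]
    have hlower : ∀ n : ℕ, 0 ≤ (X n).toReal := fun n => ENNReal.toReal_nonneg
    have hgt : Filter.Tendsto (fun n : ℕ =>
        (3 / 4) * ((3 / 4) ^ n * b 0 + n * (3 / 4) ^ n + (1 / 2) ^ (n + 1))) Filter.atTop
        (nhds 0) := by
      have t1 : Filter.Tendsto (fun n : ℕ => ((3 : ℝ) / 4) ^ n * b 0) Filter.atTop (nhds 0) := by
        simpa using (tendsto_pow_atTop_nhds_zero_of_lt_one (by norm_num : (0:ℝ) ≤ 3/4)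
          (by norm_num)).mul_const (b 0)
      have t2 : Filter.Tendsto (fun n : ℕ => (n : ℝ) * (3 / 4) ^ n) Filter.atTop (nhds 0) := by
        have hs := summable_pow_mul_geometric_of_norm_lt_one 1
          (r := (3 / 4 : ℝ)) (by rw [Real.norm_eq_abs]; rw [abs_of_pos]; norm_num; norm_num)
        have := hs.tendsto_atTop_zero
        simpa [pow_one] using this
      have t3 : Filter.Tendsto (fun n : ℕ => ((1 : ℝ) / 2) ^ (n + 1)) Filter.atTop (nhds 0) := by
        have := (tendsto_pow_atTop_nhds_zero_of_lt_one (by norm_num : (0:ℝ) ≤ 1/2)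
          (by norm_num)).const_mul (1 / 2 : ℝ)
        simpa [pow_succ'] using this
      have := ((t1.add t2).add t3).const_mul (3 / 4 : ℝ)
      simpa using this
    exact squeeze_zero hlower hupper hgt
  -- the negligible set
  set Nset : Set E3 := cylDomain ω ∩ ⋂ n, Etwo ω (es n) with hNset
  have hNm : MeasurableSet Nset :=
    (isOpen_cylDomain hω).measurableSet.inter
      (MeasurableSet.iInter fun n => (isOpen_Etwo ω (es n)).measurableSet)
  have hproj : ∀ x ∈ Nset, ∀ n, proj2 x ∈ Cs n := by
    intro x hx n
    induction n with
    | zero =>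
      have hxω : proj2 x ∈ ω := hx.1.1
      have : proj2 x ∈ Metric.closedBall 0 R₁ := hR₁ hxω
      exact Metric.closedBall_subset_closedBall (by
        have := le_abs_self R₁; linarith) this
    | succ m ih =>
      rw [hCs_succ]
      refine ⟨?_, ih⟩
      have hx2 : x ∈ Etwo ω (es m) := (Set.mem_iInter.mp hx.2) m
      have hp : proj2 x ∈ Pat ω (es m) := (mem_Etwo_iff.mp hx2).1
      exact subset_closure (Metric.self_subset_thickening (by linarith [(hes m).1]) _ hp)
  have hNbound : ∀ n, volume Nset ≤ X n := by
    intro n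
    have hεpos : 0 < es n := (hes n).1
    have hsub : Nset ⊆ ⋃ i ∈ Jset ω (es n) (Cs n),
        {x : E3 | proj2 x ∈ Metric.ball (ctr (es n) i) (5 * es n / 12) ∧
          x 2 ∈ Set.Ioo (0 : ℝ) 1} := by
      intro x hx
      have h1 : proj2 x ∈ Cs (n + 1) := hproj x hx (n + 1)
      rw [hCs_succ] at h1
      have h2 := count_subset ω hεpos (Cs n) h1
      simp only [Set.mem_iUnion] at h2 ⊢
      obtain ⟨i, hiJ, hib⟩ := h2
      exact ⟨i, hiJ, hib, hx.1.2⟩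
    calc volume Nset
        ≤ volume (⋃ i ∈ Jset ω (es n) (Cs n),
            {x : E3 | proj2 x ∈ Metric.ball (ctr (es n) i) (5 * es n / 12) ∧
              x 2 ∈ Set.Ioo (0 : ℝ) 1}) := measure_mono hsub
      _ ≤ ∑' i : Jset ω (es n) (Cs n), volume
            {x : E3 | proj2 x ∈ Metric.ball (ctr (es n) (i : ℤ × ℤ)) (5 * es n / 12) ∧
              x 2 ∈ Set.Ioo (0 : ℝ) 1} := measure_biUnion_le volume (Set.to_countable _) _
      _ ≤ ∑' _i : Jset ω (es n) (Cs n), ENNReal.ofReal (3 / 4) * ENNReal.ofReal ((es n) ^ 2) :=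
          ENNReal.tsum_le_tsum fun i =>
            le_trans (volume_cylball_le _ (by linarith)) (box34 hεpos)
      _ = ENNReal.ofReal (3 / 4) * ∑' _i : Jset ω (es n) (Cs n), ENNReal.ofReal ((es n) ^ 2) :=
          ENNReal.tsum_mul_left
      _ ≤ ENNReal.ofReal (3 / 4) * volume (Metric.thickening (2 * es n) (Cs n)) :=
          mul_le_mul_right (count_sum ω hεpos (Cs n)) _
      _ ≤ X n := mul_le_mul_right (hes n).2.2.2 _
  have hN0 : volume Nset = 0 := by
    have hfin : volume Nset ≠ ⊤ := (lt_of_le_of_lt (hNbound 0) (hXfin 0).lt_top).ne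
    have htle : (volume Nset).toReal ≤ 0 :=
      ge_of_tendsto' hXtend fun n => ENNReal.toReal_mono (hXfin n) (hNbound n)
    have h0 : (volume Nset).toReal = 0 := le_antisymm htle ENNReal.toReal_nonneg
    rcases (ENNReal.toReal_eq_zero_iff _).mp h0 with h | h
    · exact h
    · exact absurd h hfin
  -- covering of the domain
  have hcover : cylDomain ω ⊆ Nset ∪ ⋃ n, Eone ω (es n) := by
    intro x hx
    by_cases h : ∀ n, x ∈ Etwo ω (es n)
    · exact Or.inl ⟨hx, Set.mem_iInter.mpr h⟩
    · push_neg at h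
      obtain ⟨n, hn⟩ := h
      exact Or.inr (Set.mem_iUnion.mpr ⟨n, hx, hn⟩)
  -- lintegral bound
  have hkey : ∫⁻ x in cylDomain ω, ENNReal.ofReal (g x) ≤ ENNReal.ofReal cc := by
    calc ∫⁻ x in cylDomain ω, ENNReal.ofReal (g x)
        ≤ ∫⁻ x in Nset ∪ ⋃ n, Eone ω (es n), ENNReal.ofReal (g x) :=
          lintegral_mono_set hcover
      _ ≤ (∫⁻ x in Nset, ENNReal.ofReal (g x)) +
            ∫⁻ x in ⋃ n, Eone ω (es n), ENNReal.ofReal (g x) := lintegral_union_le _ _ _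
      _ = ∫⁻ x in ⋃ n, Eone ω (es n), ENNReal.ofReal (g x) := by
          rw [setLIntegral_measure_zero _ _ hN0, zero_add]
      _ ≤ ∑' n, ∫⁻ x in Eone ω (es n), ENNReal.ofReal (g x) := lintegral_iUnion_le _ _
      _ ≤ ∑' n : ℕ, ENNReal.ofReal (cc * (1 / 2) ^ (n + 1)) := by
          apply ENNReal.tsum_le_tsum
          intro n
          have hFn : Eone ω (es n) ⊆ cylDomain ω := Set.diff_subset
          have hgin : IntegrableOn g (Eone ω (es n)) volume := hgi.mono_set hFn
          rw [← ofReal_integral_eq_lintegral_ofReal hgin (Filter.Eventually.of_forall hg)]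
          exact ENNReal.ofReal_le_ofReal (hes n).2.1
      _ = ENNReal.ofReal cc := by
          have h1 : ∀ n : ℕ, ENNReal.ofReal (cc * (1 / 2) ^ (n + 1))
              = ENNReal.ofReal cc * (ENNReal.ofReal ((1 : ℝ) / 2)) ^ (n + 1) := by
            intro n
            rw [ENNReal.ofReal_mul hccpos.le, ENNReal.ofReal_pow (by norm_num)]
          rw [tsum_congr h1, ENNReal.tsum_mul_left, tsum_half_pow, mul_one]
  -- conclude
  have heq : I = (∫⁻ x in cylDomain ω, ENNReal.ofReal (g x)).toReal := by
    rw [hI]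
    exact integral_eq_lintegral_of_nonneg_ae (Filter.Eventually.of_forall hg)
      hgi.aestronglyMeasurable
  rw [heq]
  calc (∫⁻ x in cylDomain ω, ENNReal.ofReal (g x)).toReal
      ≤ (ENNReal.ofReal cc).toReal := ENNReal.toReal_mono ENNReal.ofReal_ne_top hkey
    _ = cc := ENNReal.toReal_ofReal hccpos.le
lemma cross3_add_right (a x y : E3) : cross3 a (x + y) = cross3 a x + cross3 a y := by
  apply e3_ext <;>
    simp [cross3_apply0, cross3_apply1, cross3_apply2, PiLp.add_apply] <;> ring

lemma cross3_zero_left (x : E3) : cross3 (0 : E3) x = 0 := by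
  apply e3_ext <;>
    simp [cross3_apply0, cross3_apply1, cross3_apply2]

lemma norm_sq_proj2 (x : E3) : ‖proj2 x‖ ^ 2 = x 0 ^ 2 + x 1 ^ 2 := by
  rw [norm_sq_e2, proj2_apply0, proj2_apply1]

lemma cyl_norm_bound (ω : Set E2) {R₁ : ℝ} (hR₁ : ω ⊆ Metric.closedBall 0 R₁) :
    ∀ x ∈ cylDomain ω, ‖x‖ ^ 2 ≤ R₁ ^ 2 + 1 := by
  intro x hx
  have h1 : ‖proj2 x‖ ≤ R₁ := by
    have := hR₁ hx.1
    rwa [Metric.mem_closedBall, dist_zero_right] at this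
  have h2 : ‖proj2 x‖ ^ 2 ≤ R₁ ^ 2 := by nlinarith [norm_nonneg (proj2 x)]
  rw [norm_sq_proj2] at h2
  have h3 := hx.2
  rw [norm_sq_e3]
  rcases h3 with ⟨h4, h5⟩
  nlinarith

lemma isBounded_cylDomain (ω : Set E2) {R₁ : ℝ} (hR₁ : ω ⊆ Metric.closedBall 0 R₁) :
    Bornology.IsBounded (cylDomain ω) := by
  apply Bornology.IsBounded.subset (Metric.isBounded_closedBall (x := (0 : E3)) (r := |R₁| + 1))
  intro x hx
  rw [Metric.mem_closedBall, dist_zero_right]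
  have h1 := cyl_norm_bound ω hR₁ x hx
  have h2 : R₁ ^ 2 + 1 ≤ (|R₁| + 1) ^ 2 := by
    have := abs_nonneg R₁
    have := sq_abs R₁
    nlinarith
  nlinarith [norm_nonneg x, abs_nonneg R₁]

lemma memL2_rig (ω : Set E2) (hωo : IsOpen ω) {R₁ : ℝ} (hR₁ : ω ⊆ Metric.closedBall 0 R₁) (v : E3 × E3) :
    MemLp (rig v) 2 (volume.restrict (cylDomain ω)) := by
  have hfin : volume (cylDomain ω) ≠ ⊤ := (isBounded_cylDomain ω hR₁).measure_lt_top.ne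
  haveI : IsFiniteMeasure (volume.restrict (cylDomain ω)) := by
    constructor
    rw [Measure.restrict_apply_univ]
    exact hfin.lt_top.trans_le le_rfl
  apply MemLp.of_bound (continuous_rig v).aestronglyMeasurable
    (Real.sqrt ((8 * (R₁ ^ 2 + 1) + 4) * ‖v‖ ^ 2))
  have hmeas : MeasurableSet (cylDomain ω) := (isOpen_cylDomain hωo).measurableSet
  filter_upwards [ae_restrict_mem hmeas] with x hx
  have h1 : ‖rig v x‖ ^ 2 ≤ (8 * (R₁ ^ 2 + 1) + 4) * ‖v‖ ^ 2 :=
    rig_norm_sq_le _ (by positivity) v x (cyl_norm_bound ω hR₁ x hx)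
  have h2 : ‖rig v x‖ = Real.sqrt (‖rig v x‖ ^ 2) := (Real.sqrt_sq (norm_nonneg _)).symm
  rw [h2]
  exact Real.sqrt_le_sqrt h1
lemma int_sq_rig_le (ω : Set E2) (hωo : IsOpen ω) {R₁ : ℝ}
    (hR₁ : ω ⊆ Metric.closedBall 0 R₁) {S : Set E3} (hSm : MeasurableSet S)
    (hS : S ⊆ cylDomain ω) (v : E3 × E3) :
    ∫ x in S, ‖rig v x‖ ^ 2 ≤
      ((8 * (R₁ ^ 2 + 1) + 4) * ‖v‖ ^ 2) * (volume (cylDomain ω)).toReal := by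
  have hfin : volume (cylDomain ω) ≠ ⊤ := (isBounded_cylDomain ω hR₁).measure_lt_top.ne
  have hSfin : volume S < ⊤ := (measure_mono hS).trans_lt hfin.lt_top
  have hint : IntegrableOn (fun x => ‖rig v x‖ ^ 2) S volume := by
    have h1 : MemLp (rig v) 2 (volume.restrict S) :=
      (memL2_rig ω hωo hR₁ v).mono_measure (Measure.restrict_mono hS le_rfl)
    exact h1.norm.integrable_sq
  have hconst : IntegrableOn (fun _ : E3 => (8 * (R₁ ^ 2 + 1) + 4) * ‖v‖ ^ 2) S volume := by
    exact integrableOn_const hSfin.ne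
  calc ∫ x in S, ‖rig v x‖ ^ 2
      ≤ ∫ _x in S, (8 * (R₁ ^ 2 + 1) + 4) * ‖v‖ ^ 2 := by
        apply setIntegral_mono_on hint hconst hSm
        intro x hx
        exact rig_norm_sq_le _ (by positivity) v x (cyl_norm_bound ω hR₁ x (hS hx))
    _ = (volume S).toReal * ((8 * (R₁ ^ 2 + 1) + 4) * ‖v‖ ^ 2) := by
        rw [setIntegral_const, smul_eq_mul, measureReal_def]
    _ ≤ (volume (cylDomain ω)).toReal * ((8 * (R₁ ^ 2 + 1) + 4) * ‖v‖ ^ 2) := by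
        apply mul_le_mul_of_nonneg_right (ENNReal.toReal_mono hfin (measure_mono hS))
        positivity
    _ = ((8 * (R₁ ^ 2 + 1) + 4) * ‖v‖ ^ 2) * (volume (cylDomain ω)).toReal := by ring

lemma int_sqnorm_add_le {S : Set E3} (hSm : MeasurableSet S) (F G : E3 → E3)
    (hF : IntegrableOn (fun x => ‖F x‖ ^ 2) S volume)
    (hG : IntegrableOn (fun x => ‖G x‖ ^ 2) S volume)
    (hFG : IntegrableOn (fun x => ‖F x + G x‖ ^ 2) S volume) :
    ∫ x in S, ‖F x + G x‖ ^ 2 ≤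
      2 * (∫ x in S, ‖F x‖ ^ 2) + 2 * ∫ x in S, ‖G x‖ ^ 2 := by
  have h1 : ∫ x in S, ‖F x + G x‖ ^ 2 ≤ ∫ x in S, (2 * ‖F x‖ ^ 2 + 2 * ‖G x‖ ^ 2) := by
    apply setIntegral_mono_on hFG ((hF.const_mul 2).add (hG.const_mul 2)) hSm
    intro x _
    exact sqnorm_add_le _ _
  rw [integral_add (hF.const_mul 2) (hG.const_mul 2), integral_const_mul, integral_const_mul] at h1
  linarith

lemma rig_coeffs_zero (ω : Set E2) (hωo : IsOpen ω) (hne : ω.Nonempty) (v : E3 × E3)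
    (hz : ∀ᵐ x ∂(volume.restrict (cylDomain ω)), rig v x = 0) : v = 0 := by
  have hΩo := isOpen_cylDomain hωo
  have hall : ∀ x ∈ cylDomain ω, rig v x = 0 := by
    by_contra h
    push_neg at h
    obtain ⟨x₀, hx₀, hne0⟩ := h
    set U := cylDomain ω ∩ {x : E3 | rig v x ≠ 0} with hU
    have hUopen : IsOpen U :=
      hΩo.inter ((isOpen_compl_iff.mpr isClosed_singleton).preimage (continuous_rig v))
    have hUpos : 0 < volume U := hUopen.measure_pos volume ⟨x₀, hx₀, hne0⟩
    have hae := (ae_restrict_iff' hΩo.measurableSet).mp hz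
    rw [Filter.eventually_iff, mem_ae_iff] at hae
    have hsub : U ⊆ {x : E3 | x ∈ cylDomain ω → rig v x = 0}ᶜ := by
      rintro y ⟨hy1, hy2⟩ hy3
      exact hy2 (hy3 hy1)
    exact absurd (measure_mono_null hsub hae) hUpos.ne'
  obtain ⟨y₀, hy₀⟩ := hne
  set x₀ : E3 := WithLp.toLp 2 ![y₀ 0, y₀ 1, 1/2] with hx₀def
  have hx2v : x₀ 2 = 1 / 2 := rfl
  have hx₀ : x₀ ∈ cylDomain ω := by
    refine ⟨by rw [proj2_embed]; exact hy₀, ?_, ?_⟩ <;> rw [hx2v] <;> norm_num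
  obtain ⟨ρ, hρpos, hball⟩ := Metric.isOpen_iff.mp hΩo x₀ hx₀
  have hb : ∀ z ∈ Metric.ball x₀ ρ, rig v z = 0 := fun z hzz => hall z (hball hzz)
  have hc : ∀ j : Fin 3, cross3 v.1 (EuclideanSpace.single j (ρ / 2)) = 0 := by
    intro j
    have h1 := hb x₀ (Metric.mem_ball_self hρpos)
    have h2 := hb (x₀ + EuclideanSpace.single j (ρ / 2)) (by
      rw [Metric.mem_ball, dist_eq_norm, add_sub_cancel_left, EuclideanSpace.norm_single,
        Real.norm_eq_abs, abs_of_pos (by linarith)]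
      linarith)
    have h3 : rig v (x₀ + EuclideanSpace.single j (ρ / 2))
        = rig v x₀ + cross3 v.1 (EuclideanSpace.single j (ρ / 2)) := by
      rw [rig, rig, cross3_add_right]
      abel
    rw [h1, h2] at h3
    simpa using h3.symm
  have hρne : (ρ / 2 : ℝ) ≠ 0 := by positivity
  have comp : ∀ (j k : Fin 3), cross3 v.1 (EuclideanSpace.single j (ρ / 2)) k = 0 := by
    intro j k
    rw [hc j]
    rfl
  have ha2 : v.1 2 = 0 := by
    have h := comp 0 1
    rw [cross3_apply1, EuclideanSpace.single_apply, EuclideanSpace.single_apply,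
      if_pos rfl, if_neg (by decide)] at h
    have h' : v.1 2 * (ρ / 2) = 0 := by linarith
    rcases mul_eq_zero.mp h' with h'' | h''
    · exact h''
    · exact absurd h'' hρne
  have ha1 : v.1 1 = 0 := by
    have h := comp 0 2
    rw [cross3_apply2, EuclideanSpace.single_apply, EuclideanSpace.single_apply,
      if_neg (by decide), if_pos rfl] at h
    have h' : v.1 1 * (ρ / 2) = 0 := by linarith
    rcases mul_eq_zero.mp h' with h'' | h''
    · exact h''
    · exact absurd h'' hρne
  have ha0 : v.1 0 = 0 := by
    have h := comp 1 2
    rw [cross3_apply2, EuclideanSpace.single_apply, EuclideanSpace.single_apply,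
      if_pos rfl, if_neg (by decide)] at h
    have h' : v.1 0 * (ρ / 2) = 0 := by linarith
    rcases mul_eq_zero.mp h' with h'' | h''
    · exact h''
    · exact absurd h'' hρne
  have ha : v.1 = 0 := by
    apply e3_ext
    · exact ha0
    · exact ha1
    · exact ha2
  have hbz : v.2 = 0 := by
    have h1 := hb x₀ (Metric.mem_ball_self hρpos)
    rw [rig, ha, cross3_zero_left, zero_add] at h1
    exact h1
  exact Prod.ext ha hbz
end GeomAux
set_option maxHeartbeats 1000000 in
/-- If `u_ε = c_ε×x + d_ε` on `εE¹` and `∫_{εE¹}|u_ε − u₁|² dx → 0`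
for some `u₁ ∈ L²(Ω;ℝ³)`, then `u₁` is (a.e. equal to) a rigid displacement. -/
theorem limit_on_matrix_part_is_rigid
    (ω : Set (EuclideanSpace ℝ (Fin 2))) (hω : IsOpen ω) (hωconn : IsConnected ω)
    (hωb : Bornology.IsBounded ω)
    (u : ℝ → EuclideanSpace ℝ (Fin 3) → EuclideanSpace ℝ (Fin 3))
    (c d : ℝ → EuclideanSpace ℝ (Fin 3))
    (hrig : ∀ ε : ℝ, 0 < ε → ∀ x ∈ Eone ω ε, u ε x = cross3 (c ε) x + d ε)
    (u₁ : EuclideanSpace ℝ (Fin 3) → EuclideanSpace ℝ (Fin 3))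
    (hu₁ : MemLp u₁ 2 (volume.restrict (cylDomain ω)))
    (hconv : Tendsto (fun ε : ℝ => ∫ x in Eone ω ε, ‖u ε x - u₁ x‖ ^ 2) (𝓝[>] (0 : ℝ))
      (𝓝 (0 : ℝ))) :
    ∃ c₀ d₀ : EuclideanSpace ℝ (Fin 3),
      ∀ᵐ x ∂(volume.restrict (cylDomain ω)), u₁ x = cross3 c₀ x + d₀ := by
  classical
  obtain ⟨R₁, hR₁⟩ := hωb.subset_closedBall 0
  have hΩopen : IsOpen (cylDomain ω) := isOpen_cylDomain hω
  have hΩfin : volume (cylDomain ω) ≠ ⊤ := (isBounded_cylDomain ω hR₁).measure_lt_top.ne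
  set K : ℝ := 8 * (R₁ ^ 2 + 1) + 4 with hK
  have hKpos : 0 < K := by positivity
  set Vol : ℝ := (volume (cylDomain ω)).toReal with hVol
  have hVolnn : 0 ≤ Vol := ENNReal.toReal_nonneg
  have hu₁sq : Integrable (fun x => ‖u₁ x‖ ^ 2) (volume.restrict (cylDomain ω)) :=
    hu₁.norm.integrable_sq
  -- master sequence of scales
  have hmaster : ∀ n : ℕ, ∃ e : ℝ, 0 < e ∧ e < 1 / ((n : ℝ) + 1) ∧
      (∫ x in Eone ω e, ‖u e x - u₁ x‖ ^ 2) < 1 / ((n : ℝ) + 1) := by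
    intro n
    have hpos : (0 : ℝ) < 1 / ((n : ℝ) + 1) := by positivity
    have h1 : Set.Ioo (0 : ℝ) (1 / ((n : ℝ) + 1)) ∈ 𝓝[>] (0 : ℝ) :=
      Ioo_mem_nhdsGT_of_mem ⟨le_rfl, hpos⟩
    have h2 : {e : ℝ | (∫ x in Eone ω e, ‖u e x - u₁ x‖ ^ 2) < 1 / ((n : ℝ) + 1)}
        ∈ 𝓝[>] (0 : ℝ) := hconv.eventually_lt_const hpos
    obtain ⟨e, he1, he2⟩ := Filter.nonempty_of_mem (Filter.inter_mem h1 h2)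
    exact ⟨e, he1.1, he1.2, he2⟩
  choose es hes1 hes2 hes3 using hmaster
  set vs : ℕ → (EuclideanSpace ℝ (Fin 3)) × (EuclideanSpace ℝ (Fin 3)) :=
    fun n => (c (es n), d (es n)) with hvs
  have hesmeas : ∀ n, MeasurableSet (Eone ω (es n)) := fun n => measurableSet_Eone ω hω (es n)
  have hEsub : ∀ n, Eone ω (es n) ⊆ cylDomain ω := fun n => Set.diff_subset
  have hsmall : ∀ n, (∫ x in Eone ω (es n), ‖rig (vs n) x - u₁ x‖ ^ 2) < 1 / ((n : ℝ) + 1) := by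
    intro n
    have hcongr : (∫ x in Eone ω (es n), ‖u (es n) x - u₁ x‖ ^ 2)
        = ∫ x in Eone ω (es n), ‖rig (vs n) x - u₁ x‖ ^ 2 := by
      apply setIntegral_congr_fun (hesmeas n)
      intro x hx
      simp only []
      rw [hrig (es n) (hes1 n) x hx]
      rfl
    rw [← hcongr]
    exact hes3 n
  -- integrability helpers
  have hmemu₁S : ∀ S : Set (EuclideanSpace ℝ (Fin 3)), S ⊆ cylDomain ω →
      MemLp u₁ 2 (volume.restrict S) := fun S hS =>
    hu₁.mono_measure (Measure.restrict_mono hS le_rfl)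
  have hmemrig : ∀ (S : Set (EuclideanSpace ℝ (Fin 3))), S ⊆ cylDomain ω →
      ∀ v, MemLp (rig v) 2 (volume.restrict S) := fun S hS v =>
    (memL2_rig ω hω hR₁ v).mono_measure (Measure.restrict_mono hS le_rfl)
  have hIsub : ∀ (S : Set (EuclideanSpace ℝ (Fin 3))), S ⊆ cylDomain ω → ∀ v,
      IntegrableOn (fun x => ‖rig v x - u₁ x‖ ^ 2) S volume := by
    intro S hS v
    have h1 : MemLp (fun x => rig v x - u₁ x) 2 (volume.restrict S) :=
      (hmemrig S hS v).sub (hmemu₁S S hS)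
    exact h1.norm.integrable_sq
  have hIrig2 : ∀ (S : Set (EuclideanSpace ℝ (Fin 3))), S ⊆ cylDomain ω → ∀ v,
      IntegrableOn (fun x => ‖rig v x‖ ^ 2) S volume := fun S hS v =>
    (hmemrig S hS v).norm.integrable_sq
  have hIu₁S : ∀ (S : Set (EuclideanSpace ℝ (Fin 3))), S ⊆ cylDomain ω →
      IntegrableOn (fun x => ‖u₁ x‖ ^ 2) S volume := fun S hS =>
    (hmemu₁S S hS).norm.integrable_sq
  -- uniform L² bound for the rigid displacements on their sets
  set M : ℝ := 2 * 1 + 2 * ∫ x in cylDomain ω, ‖u₁ x‖ ^ 2 with hM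
  have hMnn : 0 ≤ M := by
    have : (0 : ℝ) ≤ ∫ x in cylDomain ω, ‖u₁ x‖ ^ 2 := integral_nonneg fun x => sq_nonneg _
    rw [hM]; linarith
  have hMn : ∀ n, (∫ x in Eone ω (es n), ‖rig (vs n) x‖ ^ 2) ≤ M := by
    intro n
    have hptw : ∀ x : EuclideanSpace ℝ (Fin 3),
        rig (vs n) x = (rig (vs n) x - u₁ x) + u₁ x := fun x => by abel
    have hsplit : (∫ x in Eone ω (es n), ‖rig (vs n) x‖ ^ 2)
        = ∫ x in Eone ω (es n), ‖(rig (vs n) x - u₁ x) + u₁ x‖ ^ 2 :=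
      setIntegral_congr_fun (hesmeas n) fun x _ => by rw [← hptw x]
    have hFG : IntegrableOn (fun x => ‖(rig (vs n) x - u₁ x) + u₁ x‖ ^ 2)
        (Eone ω (es n)) volume := by
      have h1 := hIrig2 _ (hEsub n) (vs n)
      apply h1.congr_fun _ (hesmeas n)
      intro x _
      simp only []
      rw [← hptw x]
    have hle := int_sqnorm_add_le (hesmeas n) (fun x => rig (vs n) x - u₁ x) u₁
      (hIsub _ (hEsub n) (vs n)) (hIu₁S _ (hEsub n)) hFG
    have hu₁mono : (∫ x in Eone ω (es n), ‖u₁ x‖ ^ 2) ≤ ∫ x in cylDomain ω, ‖u₁ x‖ ^ 2 :=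
      setIntegral_mono_set (hIu₁S _ (subset_refl _))
        (Filter.Eventually.of_forall fun x => sq_nonneg _)
        ((hEsub n).eventuallyLE)
    have hn1 : (∫ x in Eone ω (es n), ‖rig (vs n) x - u₁ x‖ ^ 2) ≤ 1 := by
      have := hsmall n
      have h1 : 1 / ((n : ℝ) + 1) ≤ 1 := by
        rw [div_le_one (by positivity)]
        simp
      linarith
    rw [hsplit]
    calc (∫ x in Eone ω (es n), ‖(rig (vs n) x - u₁ x) + u₁ x‖ ^ 2)
        ≤ 2 * (∫ x in Eone ω (es n), ‖rig (vs n) x - u₁ x‖ ^ 2) +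
            2 * ∫ x in Eone ω (es n), ‖u₁ x‖ ^ 2 := hle
      _ ≤ M := by rw [hM]; nlinarith
  -- a generic consequence-extraction: from CL conclusion to the contradiction/result
  by_cases hbdd : ∃ B : ℝ, ∀ n, ‖vs n‖ ≤ B
  · -- bounded coefficients: extract a converging subsequence and conclude
    obtain ⟨B, hB⟩ := hbdd
    obtain ⟨vstar, _hvmem, φ, hφmono, hφtend⟩ :=
      (isCompact_closedBall (0 : (EuclideanSpace ℝ (Fin 3)) × (EuclideanSpace ℝ (Fin 3))) B).tendsto_subseq
        (x := vs) (fun n => by rw [Metric.mem_closedBall, dist_zero_right]; exact hB n)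
    refine ⟨vstar.1, vstar.2, ?_⟩
    have hdist0 : Tendsto (fun k => K * ‖vstar - vs (φ k)‖ ^ 2 * Vol) atTop (𝓝 0) := by
      have hf : Continuous fun v : (EuclideanSpace ℝ (Fin 3)) × (EuclideanSpace ℝ (Fin 3)) =>
          K * ‖vstar - v‖ ^ 2 * Vol :=
        (continuous_const.mul (((continuous_const.sub continuous_id).norm.pow 2))).mul
          continuous_const
      have := (hf.tendsto vstar).comp hφtend
      simpa [Function.comp_def] using this
    have hone : Tendsto (fun k : ℕ => 1 / ((φ k : ℝ) + 1)) atTop (𝓝 0) :=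
      tendsto_one_div_add_atTop_nhds_zero_nat.comp hφmono.tendsto_atTop
    have h2tend : Tendsto (fun k : ℕ =>
        2 * (K * ‖vstar - vs (φ k)‖ ^ 2 * Vol) + 2 * (1 / ((φ k : ℝ) + 1))) atTop (𝓝 0) := by
      have := (hdist0.const_mul 2).add (hone.const_mul 2)
      simpa using this
    have hH : ∀ θ : ℝ, 0 < θ → ∀ δ : ℝ, 0 < δ → ∃ e, 0 < e ∧ e < δ ∧
        (∫ x in Eone ω e, ‖rig vstar x - u₁ x‖ ^ 2) ≤ θ := by
      intro θ hθ δ hδ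
      obtain ⟨k, hk1, hk2⟩ := ((h2tend.eventually_lt_const hθ).and
        (hone.eventually_lt_const hδ)).exists
      refine ⟨es (φ k), hes1 _, lt_trans (hes2 _) hk2, ?_⟩
      have hptw : ∀ x : EuclideanSpace ℝ (Fin 3), rig vstar x - u₁ x
          = rig (vstar - vs (φ k)) x + (rig (vs (φ k)) x - u₁ x) := by
        intro x
        rw [← rig_sub]
        abel
      have hcongr2 : (∫ x in Eone ω (es (φ k)), ‖rig vstar x - u₁ x‖ ^ 2)
          = ∫ x in Eone ω (es (φ k)),
              ‖rig (vstar - vs (φ k)) x + (rig (vs (φ k)) x - u₁ x)‖ ^ 2 :=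
        setIntegral_congr_fun (hesmeas _) fun x _ => by rw [hptw x]
      have hFG : IntegrableOn
          (fun x => ‖rig (vstar - vs (φ k)) x + (rig (vs (φ k)) x - u₁ x)‖ ^ 2)
          (Eone ω (es (φ k))) volume := by
        apply (hIsub _ (hEsub (φ k)) vstar).congr_fun _ (hesmeas _)
        intro x _
        simp only []
        rw [← hptw x]
      have hle := int_sqnorm_add_le (hesmeas (φ k)) (rig (vstar - vs (φ k)))
        (fun x => rig (vs (φ k)) x - u₁ x)
        (hIrig2 _ (hEsub (φ k)) _) (hIsub _ (hEsub (φ k)) _) hFG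
      have hb1 := int_sq_rig_le ω hω hR₁ (hesmeas (φ k)) (hEsub (φ k)) (vstar - vs (φ k))
      have hb2 := (hsmall (φ k)).le
      rw [hcongr2]
      calc (∫ x in Eone ω (es (φ k)),
              ‖rig (vstar - vs (φ k)) x + (rig (vs (φ k)) x - u₁ x)‖ ^ 2)
          ≤ 2 * (∫ x in Eone ω (es (φ k)), ‖rig (vstar - vs (φ k)) x‖ ^ 2) +
              2 * ∫ x in Eone ω (es (φ k)), ‖rig (vs (φ k)) x - u₁ x‖ ^ 2 := hle
        _ ≤ 2 * (K * ‖vstar - vs (φ k)‖ ^ 2 * Vol) + 2 * (1 / ((φ k : ℝ) + 1)) := by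
            have hKb : (8 * (R₁ ^ 2 + 1) + 4) * ‖vstar - vs (φ k)‖ ^ 2 *
                (volume (cylDomain ω)).toReal = K * ‖vstar - vs (φ k)‖ ^ 2 * Vol := by
              rw [hK, hVol]
            rw [hKb] at hb1
            linarith
        _ ≤ θ := hk1.le
    have hg0 : ∀ x, (0 : ℝ) ≤ ‖rig vstar x - u₁ x‖ ^ 2 := fun x => sq_nonneg _
    have hCL := integral_le_of_small_on_Eone ω hω hωb _ hg0
      (hIsub _ (subset_refl _) vstar) hH
    have hge : (0 : ℝ) ≤ ∫ x in cylDomain ω, ‖rig vstar x - u₁ x‖ ^ 2 :=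
      integral_nonneg fun x => sq_nonneg _
    have hzero : (∫ x in cylDomain ω, ‖rig vstar x - u₁ x‖ ^ 2) = 0 := le_antisymm hCL hge
    have hae := (integral_eq_zero_iff_of_nonneg hg0 (hIsub _ (subset_refl _) vstar)).mp hzero
    have hae' : ∀ᵐ x ∂(volume.restrict (cylDomain ω)), ‖rig vstar x - u₁ x‖ ^ 2 = 0 := hae
    filter_upwards [hae'] with x hx
    have h1 : ‖rig vstar x - u₁ x‖ = 0 := by
      nlinarith [norm_nonneg (rig vstar x - u₁ x)]
    have h2 : rig vstar x - u₁ x = 0 := norm_eq_zero.mp h1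
    have h3 : rig vstar x = u₁ x := by rwa [sub_eq_zero] at h2
    exact h3.symm
  · -- unbounded coefficients: derive a contradiction
    exfalso
    push_neg at hbdd
    have hsel : ∀ k : ℕ, ∃ n, (k : ℝ) + 1 < ‖vs n‖ := fun k => hbdd ((k : ℝ) + 1)
    choose ns hns using hsel
    set ws : ℕ → (EuclideanSpace ℝ (Fin 3)) × (EuclideanSpace ℝ (Fin 3)) :=
      fun k => (‖vs (ns k)‖)⁻¹ • vs (ns k) with hws
    have hnorm_pos : ∀ k, 0 < ‖vs (ns k)‖ := fun k => lt_of_le_of_lt (by positivity) (hns k)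
    have hwmem : ∀ k, ws k ∈ Metric.sphere
        (0 : (EuclideanSpace ℝ (Fin 3)) × (EuclideanSpace ℝ (Fin 3))) 1 := by
      intro k
      rw [mem_sphere_zero_iff_norm, hws, norm_smul, norm_inv, norm_norm]
      exact inv_mul_cancel₀ (hnorm_pos k).ne'
    obtain ⟨w, hwmem', φ, hφmono, hφtend⟩ :=
      (isCompact_sphere (0 : (EuclideanSpace ℝ (Fin 3)) × (EuclideanSpace ℝ (Fin 3))) 1).tendsto_subseq hwmem
    -- the selected indices tend to infinity
    have hnstend : Tendsto (fun k => ns (φ k)) atTop atTop := by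
      rw [Filter.tendsto_atTop_atTop]
      intro N
      obtain ⟨B₀, hB₀⟩ := Finset.exists_le ((Finset.range N).image fun n => ‖vs n‖)
      refine ⟨⌈B₀⌉₊, fun k hk => ?_⟩
      by_contra hcon
      push_neg at hcon
      have hmem : ns (φ k) ∈ Finset.range N := Finset.mem_range.mpr hcon
      have h1 : ‖vs (ns (φ k))‖ ≤ B₀ :=
        hB₀ _ (Finset.mem_image_of_mem _ hmem)
      have h2 : (φ k : ℝ) + 1 < ‖vs (ns (φ k))‖ := hns (φ k)
      have h3 : (k : ℝ) ≤ (φ k : ℝ) := by exact_mod_cast hφmono.le_apply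
      have h4 : B₀ ≤ (⌈B₀⌉₊ : ℝ) := Nat.le_ceil B₀
      have h5 : ((⌈B₀⌉₊ : ℕ) : ℝ) ≤ (k : ℝ) := by exact_mod_cast hk
      linarith
    have hone : Tendsto (fun k : ℕ => 1 / ((φ k : ℝ) + 1)) atTop (𝓝 0) :=
      tendsto_one_div_add_atTop_nhds_zero_nat.comp hφmono.tendsto_atTop
    have hdist0 : Tendsto (fun k => K * ‖w - ws (φ k)‖ ^ 2 * Vol) atTop (𝓝 0) := by
      have hf : Continuous fun v : (EuclideanSpace ℝ (Fin 3)) × (EuclideanSpace ℝ (Fin 3)) =>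
          K * ‖w - v‖ ^ 2 * Vol :=
        (continuous_const.mul (((continuous_const.sub continuous_id).norm.pow 2))).mul
          continuous_const
      have := (hf.tendsto w).comp hφtend
      simpa [Function.comp_def] using this
    have hsq : Tendsto (fun k : ℕ => M * (1 / ((φ k : ℝ) + 1)) ^ 2) atTop (𝓝 0) := by
      have := ((hone.pow 2).const_mul M)
      simpa using this
    have h2tend : Tendsto (fun k : ℕ =>
        2 * (K * ‖w - ws (φ k)‖ ^ 2 * Vol) + 2 * (M * (1 / ((φ k : ℝ) + 1)) ^ 2)) atTop
        (𝓝 0) := by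
      have := (hdist0.const_mul 2).add (hsq.const_mul 2)
      simpa using this
    have hinvle : ∀ k, (‖vs (ns (φ k))‖)⁻¹ ≤ 1 / ((φ k : ℝ) + 1) := by
      intro k
      rw [one_div]
      exact inv_anti₀ (by positivity) (hns (φ k)).le
    -- CL hypothesis for g = ‖rig w‖²
    have hH : ∀ θ : ℝ, 0 < θ → ∀ δ : ℝ, 0 < δ → ∃ e, 0 < e ∧ e < δ ∧
        (∫ x in Eone ω e, ‖rig w x‖ ^ 2) ≤ θ := by
      intro θ hθ δ hδ
      have hδev : ∀ᶠ k in atTop, 1 / ((ns (φ k) : ℝ) + 1) < δ := by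
        have : Tendsto (fun k => 1 / ((ns (φ k) : ℝ) + 1)) atTop (𝓝 0) :=
          tendsto_one_div_add_atTop_nhds_zero_nat.comp hnstend
        exact this.eventually_lt_const hδ
      obtain ⟨k, hk1, hk2⟩ := ((h2tend.eventually_lt_const hθ).and hδev).exists
      refine ⟨es (ns (φ k)), hes1 _, lt_trans (hes2 _) hk2, ?_⟩
      have hptw : ∀ x : EuclideanSpace ℝ (Fin 3),
          rig w x = rig (w - ws (φ k)) x + rig (ws (φ k)) x := by
        intro x
        rw [← rig_sub]
        abel
      have hcongr2 : (∫ x in Eone ω (es (ns (φ k))), ‖rig w x‖ ^ 2)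
          = ∫ x in Eone ω (es (ns (φ k))),
              ‖rig (w - ws (φ k)) x + rig (ws (φ k)) x‖ ^ 2 :=
        setIntegral_congr_fun (hesmeas _) fun x _ => by rw [← hptw x]
      have hFG : IntegrableOn
          (fun x => ‖rig (w - ws (φ k)) x + rig (ws (φ k)) x‖ ^ 2)
          (Eone ω (es (ns (φ k)))) volume := by
        apply (hIrig2 _ (hEsub (ns (φ k))) w).congr_fun _ (hesmeas _)
        intro x _
        simp only []
        rw [← hptw x]
      have hle := int_sqnorm_add_le (hesmeas (ns (φ k))) (rig (w - ws (φ k)))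
        (rig (ws (φ k))) (hIrig2 _ (hEsub _) _) (hIrig2 _ (hEsub _) _) hFG
      have hb1 := int_sq_rig_le ω hω hR₁ (hesmeas (ns (φ k))) (hEsub (ns (φ k)))
        (w - ws (φ k))
      -- bound for the normalized rigid displacement
      have hscale : (∫ x in Eone ω (es (ns (φ k))), ‖rig (ws (φ k)) x‖ ^ 2)
          ≤ M * (1 / ((φ k : ℝ) + 1)) ^ 2 := by
        set t : ℝ := (‖vs (ns (φ k))‖)⁻¹ with ht
        have htnn : 0 ≤ t := by positivity
        have hsc : ∀ x : EuclideanSpace ℝ (Fin 3),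
            ‖rig (ws (φ k)) x‖ ^ 2 = t ^ 2 * ‖rig (vs (ns (φ k))) x‖ ^ 2 := by
          intro x
          have h0 : ws (φ k) = t • vs (ns (φ k)) := rfl
          rw [h0, rig_smul, norm_smul, Real.norm_eq_abs, abs_of_nonneg htnn, mul_pow]
        have hsceq : (∫ x in Eone ω (es (ns (φ k))), ‖rig (ws (φ k)) x‖ ^ 2)
            = t ^ 2 * ∫ x in Eone ω (es (ns (φ k))), ‖rig (vs (ns (φ k))) x‖ ^ 2 := by
          rw [← integral_const_mul]
          exact setIntegral_congr_fun (hesmeas _) fun x _ => hsc x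
        rw [hsceq]
        have h1 := hMn (ns (φ k))
        have h2 := hinvle k
        have h3 : t ^ 2 ≤ (1 / ((φ k : ℝ) + 1)) ^ 2 := by
          apply pow_le_pow_left₀ htnn h2
        have h4 : (0 : ℝ) ≤ ∫ x in Eone ω (es (ns (φ k))), ‖rig (vs (ns (φ k))) x‖ ^ 2 :=
          integral_nonneg fun x => sq_nonneg _
        calc t ^ 2 * ∫ x in Eone ω (es (ns (φ k))), ‖rig (vs (ns (φ k))) x‖ ^ 2
            ≤ (1 / ((φ k : ℝ) + 1)) ^ 2 * M := by
              apply mul_le_mul h3 h1 h4 (by positivity)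
          _ = M * (1 / ((φ k : ℝ) + 1)) ^ 2 := by ring
      rw [hcongr2]
      calc (∫ x in Eone ω (es (ns (φ k))),
              ‖rig (w - ws (φ k)) x + rig (ws (φ k)) x‖ ^ 2)
          ≤ 2 * (∫ x in Eone ω (es (ns (φ k))), ‖rig (w - ws (φ k)) x‖ ^ 2) +
              2 * ∫ x in Eone ω (es (ns (φ k))), ‖rig (ws (φ k)) x‖ ^ 2 := hle
        _ ≤ 2 * (K * ‖w - ws (φ k)‖ ^ 2 * Vol) + 2 * (M * (1 / ((φ k : ℝ) + 1)) ^ 2) := by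
            have hKb : (8 * (R₁ ^ 2 + 1) + 4) * ‖w - ws (φ k)‖ ^ 2 *
                (volume (cylDomain ω)).toReal = K * ‖w - ws (φ k)‖ ^ 2 * Vol := by
              rw [hK, hVol]
            rw [hKb] at hb1
            linarith [hscale]
        _ ≤ θ := hk1.le
    have hg0 : ∀ x, (0 : ℝ) ≤ ‖rig w x‖ ^ 2 := fun x => sq_nonneg _
    have hCL := integral_le_of_small_on_Eone ω hω hωb _ hg0
      (hIrig2 _ (subset_refl _) w) hH
    have hge : (0 : ℝ) ≤ ∫ x in cylDomain ω, ‖rig w x‖ ^ 2 :=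
      integral_nonneg fun x => sq_nonneg _
    have hzero : (∫ x in cylDomain ω, ‖rig w x‖ ^ 2) = 0 := le_antisymm hCL hge
    have hae := (integral_eq_zero_iff_of_nonneg hg0 (hIrig2 _ (subset_refl _) w)).mp hzero
    have haez : ∀ᵐ x ∂(volume.restrict (cylDomain ω)), rig w x = 0 := by
      filter_upwards [hae] with x hx
      have h1 : ‖rig w x‖ = 0 := by
        have hx' : ‖rig w x‖ ^ 2 = 0 := hx
        nlinarith [norm_nonneg (rig w x)]
      exact norm_eq_zero.mp h1
    have hw0 : w = 0 := rig_coeffs_zero ω hω hωconn.nonempty w haez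
    rw [mem_sphere_zero_iff_norm, hw0, norm_zero] at hwmem'
    exact one_ne_zero hwmem'.symm
end
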